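/- Extension lemma for 3-trees: Let G be a 3-tree with a branch B = B({v₁,v₂,v₃},u₀) that is an ear, a one-hat, or a one-hat plus, and let G' = G − (V(B)∖{v₁,v₂,v₃}). If G' admits an odd 5-coloring φ', then for any index i ∈ {1,2,3}, φ' extends to a proper 5-coloring of G such that every vertex outside {v_i, v_{i+1}} satisfies the odd condition (indices mod 3). Moreover, if B is a one-hat or a one-hat plus, φ' extends so that every vertex except possibly v_i satisfies the odd condition. -/

import Mathlib

open SimpleGraph Finset
open scoped Classical

section Defs

variable {V : Type*}

/-- Degree of a vertex (classical, no decidability assumptions). -/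
noncomputable def gdeg [Fintype V] (G : SimpleGraph V) (v : V) : ℕ :=
  (Finset.univ.filter fun u => G.Adj v u).card

/-- Number of neighbors of `v` receiving color `c` under `φ`. -/
noncomputable def colorCount [Fintype V] (G : SimpleGraph V) {α : Type*} (φ : V → α)
    (v : V) (c : α) : ℕ :=
  (Finset.univ.filter fun u => G.Adj v u ∧ φ u = c).card

/-- `φ` is a proper coloring of `G`. -/
def ProperColoring (G : SimpleGraph V) {α : Type*} (φ : V → α) : Prop :=
  ∀ u w, G.Adj u w → φ u ≠ φ w

/-- Vertex `v` satisfies the odd condition w.r.t. `φ`. -/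
def OddAt [Fintype V] (G : SimpleGraph V) {α : Type*} (φ : V → α) (v : V) : Prop :=
  ∃ c, Odd (colorCount G φ v c)

/-- `φ` is an odd `m`-coloring of `G`. -/
def IsOddColoring [Fintype V] (G : SimpleGraph V) (m : ℕ) (φ : V → Fin m) : Prop :=
  ProperColoring G φ ∧ ∀ v : V, (∃ u, G.Adj v u) → OddAt G φ v

/-- `G` is odd `m`-colorable. -/
def OddColorable [Fintype V] (G : SimpleGraph V) (m : ℕ) : Prop :=
  ∃ φ : V → Fin m, IsOddColoring G m φ

/-- The identity ordering of `Fin n` is an addition ordering of `G` as a `k`-tree: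
the first `k+1` vertices form a clique and every later vertex's earlier neighborhood
is a clique of order `k`. -/
def IsAdditionOrdering {n : ℕ} (k : ℕ) (G : SimpleGraph (Fin n)) : Prop :=
  (∀ i j : Fin n, i.val < k + 1 → j.val < k + 1 → i ≠ j → G.Adj i j) ∧
  ∀ i : Fin n, k + 1 ≤ i.val →
    G.IsNClique k (Finset.univ.filter fun j => j < i ∧ G.Adj i j)

/-- `G` is a `k`-tree. -/
def IsKTree (k : ℕ) [Fintype V] (G : SimpleGraph V) : Prop :=
  k + 1 ≤ Fintype.card V ∧
  ∃ e : V ≃ Fin (Fintype.card V),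
    IsAdditionOrdering k (SimpleGraph.comap (fun j => e.symm j) G)

/-- The graph obtained from `G` by deleting the vertices in `S`
(the vertices of `S` are kept but become isolated). -/
def GraphDel (G : SimpleGraph V) (S : Set V) : SimpleGraph V where
  Adj x y := G.Adj x y ∧ x ∉ S ∧ y ∉ S
  symm := ⟨fun x y h => ⟨h.1.symm, h.2.2, h.2.1⟩⟩
  loopless := ⟨fun x h => G.irrefl h.1⟩

end Defs
section Defs
variable {V : Type*}

/-- An ear of a 2-tree over the edge `{v₁,v₂}`. -/
def IsEar2 (G : SimpleGraph V) (v₁ v₂ u₀ : V) : Prop :=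
  G.Adj v₁ v₂ ∧ G.neighborSet u₀ = {v₁, v₂}

/-- A hat of a 2-tree over the edge `{v₁,v₂}`. -/
def IsHat2 (G : SimpleGraph V) (v₁ v₂ u₀ u₁ u₂ : V) : Prop :=
  G.Adj v₁ v₂ ∧ G.neighborSet u₀ = {v₁, v₂, u₁, u₂} ∧
  G.neighborSet u₁ = {v₁, u₀} ∧ G.neighborSet u₂ = {v₂, u₀}

/-- A double hat of a 2-tree over the edge `{v₁,v₂}`. -/
def IsDoubleHat2 (G : SimpleGraph V) (v₁ v₂ u₀ u₁ u₂ u₃ u₄ u₅ u₆ : V) : Prop :=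
  G.Adj v₁ v₂ ∧
  G.neighborSet u₀ = {v₁, v₂, u₁, u₂, u₄, u₅} ∧
  G.neighborSet u₁ = {v₁, u₀, u₃, u₄} ∧
  G.neighborSet u₂ = {v₂, u₀, u₅, u₆} ∧
  G.neighborSet u₃ = {v₁, u₁} ∧ G.neighborSet u₄ = {u₀, u₁} ∧
  G.neighborSet u₅ = {u₀, u₂} ∧ G.neighborSet u₆ = {v₂, u₂}

/-- The branch over the edge `{a,b}` with apex `u` is an ear, a hat, or a double hat. -/
def SpecialBranch2 (G : SimpleGraph V) (a b u : V) : Prop :=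
  IsEar2 G a b u ∨ (∃ x y, IsHat2 G a b u x y) ∨
  ∃ x₁ x₂ x₃ x₄ x₅ x₆, IsDoubleHat2 G a b u x₁ x₂ x₃ x₄ x₅ x₆

/-- `|N(u₀) ∩ N(a)| ≤ 1`. -/
def Side2Small (G : SimpleGraph V) (a u₀ : V) : Prop :=
  (G.neighborSet u₀ ∩ G.neighborSet a).Subsingleton

/-- `N(u₀) ∩ N(a) = {b, u}` with `B({a,u₀},u)` an ear, hat or double hat. -/
def Side2Branch (G : SimpleGraph V) (a b u₀ : V) : Prop :=
  ∃ u, b ≠ u ∧ G.neighborSet u₀ ∩ G.neighborSet a = {b, u} ∧ SpecialBranch2 G a u₀ u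

/-- Membership of the branch `B({v₁,v₂},u₀)` in `𝓗⁽²⁾(G)`. -/
def InH2 (G : SimpleGraph V) (v₁ v₂ u₀ : V) : Prop :=
  G.Adj v₁ v₂ ∧ G.Adj v₁ u₀ ∧ G.Adj v₂ u₀ ∧
  (Side2Small G v₁ u₀ ∨ Side2Branch G v₁ v₂ u₀) ∧
  (Side2Small G v₂ u₀ ∨ Side2Branch G v₂ v₁ u₀) ∧
  (Side2Branch G v₁ v₂ u₀ ∨ Side2Branch G v₂ v₁ u₀)

/-- Membership of a pair of special branches over the edge `{v₁,v₂}` in `𝓣⁽²⁾(G)`. -/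
def InT2 (G : SimpleGraph V) (v₁ v₂ : V) : Prop :=
  ∃ u₀ w₀, u₀ ≠ w₀ ∧ SpecialBranch2 G v₁ v₂ u₀ ∧ SpecialBranch2 G v₁ v₂ w₀

/-- An ear of a 3-tree over the triangle `{v₁,v₂,v₃}`. -/
def IsEar3 (G : SimpleGraph V) (v₁ v₂ v₃ u₀ : V) : Prop :=
  G.Adj v₁ v₂ ∧ G.Adj v₂ v₃ ∧ G.Adj v₁ v₃ ∧ G.neighborSet u₀ = {v₁, v₂, v₃}

/-- A one-hat of a 3-tree over the triangle `{v₁,v₂,v₃}`. -/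
def IsOneHat3 (G : SimpleGraph V) (v₁ v₂ v₃ u₀ u₁ : V) : Prop :=
  G.Adj v₁ v₂ ∧ G.Adj v₂ v₃ ∧ G.Adj v₁ v₃ ∧
  G.neighborSet u₀ = {v₁, v₂, v₃, u₁} ∧ G.neighborSet u₁ = {v₁, v₂, u₀}

/-- A one-hat plus of a 3-tree over the triangle `{v₁,v₂,v₃}`. -/
def IsOneHatPlus3 (G : SimpleGraph V) (v₁ v₂ v₃ u₀ u₁ u₂ u₃ : V) : Prop :=
  G.Adj v₁ v₂ ∧ G.Adj v₂ v₃ ∧ G.Adj v₁ v₃ ∧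
  G.neighborSet u₀ = {v₁, v₂, v₃, u₁, u₂, u₃} ∧
  G.neighborSet u₁ = {v₁, v₂, u₀, u₃} ∧
  G.neighborSet u₂ = {v₂, v₃, u₀} ∧
  G.neighborSet u₃ = {v₁, u₀, u₁}

/-- The branch over the (unordered) triangle `{a,b,c}` with apex `u` is a one-hat. -/
def IsOneHatBranch3 (G : SimpleGraph V) (a b c u : V) : Prop :=
  ∃ x, IsOneHat3 G a b c u x ∨ IsOneHat3 G b c a u x ∨ IsOneHat3 G c a b u x

/-- The branch over the (unordered) triangle `{a,b,c}` with apex `u` is a one-hat plus. -/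
def IsOneHatPlusBranch3 (G : SimpleGraph V) (a b c u : V) : Prop :=
  ∃ x₁ x₂ x₃,
    IsOneHatPlus3 G a b c u x₁ x₂ x₃ ∨ IsOneHatPlus3 G b c a u x₁ x₂ x₃ ∨
    IsOneHatPlus3 G c a b u x₁ x₂ x₃ ∨ IsOneHatPlus3 G a c b u x₁ x₂ x₃ ∨
    IsOneHatPlus3 G b a c u x₁ x₂ x₃ ∨ IsOneHatPlus3 G c b a u x₁ x₂ x₃

/-- The branch over the triangle `{a,b,c}` with apex `u` is an ear, one-hat or one-hat plus. -/
def SpecialBranch3 (G : SimpleGraph V) (a b c u : V) : Prop :=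
  IsEar3 G a b c u ∨ IsOneHatBranch3 G a b c u ∨ IsOneHatPlusBranch3 G a b c u

/-- `|N(u₀) ∩ N(a) ∩ N(b)| ≤ 1`. -/
def Side3Small (G : SimpleGraph V) (a b u₀ : V) : Prop :=
  (G.neighborSet u₀ ∩ G.neighborSet a ∩ G.neighborSet b).Subsingleton

/-- `N(u₀) ∩ N(a) ∩ N(b) = {c, u}` with `B({a,b,u₀},u)` an ear, one-hat or one-hat plus. -/
def Side3Branch (G : SimpleGraph V) (a b c u₀ : V) : Prop :=
  ∃ u, c ≠ u ∧ G.neighborSet u₀ ∩ G.neighborSet a ∩ G.neighborSet b = {c, u} ∧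
    SpecialBranch3 G a b u₀ u

/-- Membership of the branch `B({v₁,v₂,v₃},u₀)` in `𝓗⁽³⁾(G)`. -/
def InH3 (G : SimpleGraph V) (v₁ v₂ v₃ u₀ : V) : Prop :=
  G.Adj v₁ v₂ ∧ G.Adj v₂ v₃ ∧ G.Adj v₁ v₃ ∧
  G.Adj v₁ u₀ ∧ G.Adj v₂ u₀ ∧ G.Adj v₃ u₀ ∧
  (Side3Small G v₁ v₂ u₀ ∨ Side3Branch G v₁ v₂ v₃ u₀) ∧
  (Side3Small G v₂ v₃ u₀ ∨ Side3Branch G v₂ v₃ v₁ u₀) ∧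
  (Side3Small G v₃ v₁ u₀ ∨ Side3Branch G v₃ v₁ v₂ u₀) ∧
  (Side3Branch G v₁ v₂ v₃ u₀ ∨ Side3Branch G v₂ v₃ v₁ u₀ ∨ Side3Branch G v₃ v₁ v₂ u₀)

/-- Membership of a pair of special branches over the triangle `{v₁,v₂,v₃}` in `𝓣⁽³⁾(G)`. -/
def InT3 (G : SimpleGraph V) (v₁ v₂ v₃ : V) : Prop :=
  ∃ u₀ w₀, u₀ ≠ w₀ ∧ SpecialBranch3 G v₁ v₂ v₃ u₀ ∧ SpecialBranch3 G v₁ v₂ v₃ w₀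
end Defs
section Base
variable {V : Type*} [Fintype V] [DecidableEq V] (G : SimpleGraph V)

lemma colorCount_eq_sum {α : Type*} [DecidableEq α] (φ : V → α) (vv : V) (c : α)
    (N : Finset V) (hN : G.neighborSet vv = ↑N) :
    colorCount G φ vv c = ∑ u ∈ N, if φ u = c then 1 else 0 := by
  classical
  have hadj : ∀ u, G.Adj vv u ↔ u ∈ N := by
    intro u
    rw [← SimpleGraph.mem_neighborSet, hN, Finset.mem_coe]
  rw [colorCount, Finset.card_filter]
  trans (∑ u ∈ Finset.univ, if u ∈ N then (if φ u = c then 1 else 0) else 0)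
  · exact Finset.sum_congr rfl (fun u _ => by
      by_cases h1 : G.Adj vv u <;> by_cases h2 : φ u = c <;>
        simp [h1, h2, (hadj u).symm] <;> tauto)
  · rw [Finset.sum_ite_mem, Finset.univ_inter]

lemma colorCount_out (S : Finset V) {α : Type*} [DecidableEq α] (φ φ' : V → α)
    (hagree : ∀ x ∉ S, φ x = φ' x) (x : V) (hx : x ∉ S) (c : α) :
    colorCount G φ x c
      = colorCount (GraphDel G ↑S) φ' x c + ∑ u ∈ S, if G.Adj x u ∧ φ u = c then 1 else 0 := by
  classical
  rw [colorCount, colorCount, Finset.card_filter, Finset.card_filter]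
  trans (∑ u ∈ Finset.univ, ((if (GraphDel G ↑S).Adj x u ∧ φ' u = c then 1 else 0)
      + if u ∈ S then (if G.Adj x u ∧ φ u = c then 1 else 0) else 0))
  swap
  · rw [Finset.sum_add_distrib, Finset.sum_ite_mem, Finset.univ_inter]
    congr 1
    exact Finset.sum_congr rfl (fun u _ => by congr 1)
  refine Finset.sum_congr rfl (fun u _ => ?_)
  by_cases hu : u ∈ S
  · have : ¬ (GraphDel G ↑S).Adj x u := by
      intro h; exact h.2.2 (by simpa using hu)
    by_cases h2 : G.Adj x u ∧ φ u = c <;> simp [this, hu, h2]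
  · have h1 : (GraphDel G ↑S).Adj x u ↔ G.Adj x u := by
      constructor
      · exact fun h => h.1
      · exact fun h => ⟨h, by simpa using hx, by simpa using hu⟩
    have h2 : φ u = φ' u := hagree u hu
    by_cases h3 : G.Adj x u <;> by_cases h4 : φ u = c <;>
      simp [h1, h2.symm, h3, h4, hu]

lemma proper_extend (S : Finset V) {α : Type*} (φ φ' : V → α)
    (hagree : ∀ x ∉ S, φ x = φ' x)
    (hP' : ProperColoring (GraphDel G ↑S) φ')
    (hS : ∀ u w, G.Adj u w → (u ∈ S ∨ w ∈ S) → φ u ≠ φ w) :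
    ProperColoring G φ := by
  intro u w huw
  by_cases hu : u ∈ S
  · exact hS u w huw (Or.inl hu)
  by_cases hw : w ∈ S
  · exact hS u w huw (Or.inr hw)
  rw [hagree u hu, hagree w hw]
  exact hP' u w ⟨huw, by simpa using hu, by simpa using hw⟩

lemma far_odd (S : Finset V) (φ φ' : V → Fin 5)
    (hagree : ∀ x ∉ S, φ x = φ' x)
    (hφ' : IsOddColoring (GraphDel G ↑S) 5 φ')
    (x : V) (hx : x ∉ S) (hfar : ∀ u ∈ S, ¬ G.Adj x u)
    (hni : ∃ u, G.Adj x u) : OddAt G φ x := by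
  obtain ⟨u, hu⟩ := hni
  have hunS : u ∉ S := fun h => hfar u h hu
  have hni' : ∃ u, (GraphDel G ↑S).Adj x u :=
    ⟨u, hu, by simpa using hx, by simpa using hunS⟩
  obtain ⟨c, hc⟩ := hφ'.2 x hni'
  refine ⟨c, ?_⟩
  rw [colorCount_out G S φ φ' hagree x hx c]
  rw [Finset.sum_eq_zero (fun u hu => by simp [hfar u hu])]
  simpa using hc

lemma exists_two_colors (a b c : Fin 5) (hab : a ≠ b) (hac : a ≠ c) (hbc : b ≠ c) :
    ∃ x y : Fin 5, x ≠ y ∧ x ≠ a ∧ x ≠ b ∧ x ≠ c ∧ y ≠ a ∧ y ≠ b ∧ y ≠ c := by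
  revert hab hac hbc; revert a b c; decide

lemma exists_three_colors (a b : Fin 5) (hab : a ≠ b) :
    ∃ x y z : Fin 5, x ≠ y ∧ x ≠ z ∧ y ≠ z ∧ x ≠ a ∧ x ≠ b ∧ y ≠ a ∧ y ≠ b ∧ z ≠ a ∧ z ≠ b := by
  revert hab; revert a b; decide

end Base
section Sums
variable {V : Type*} [DecidableEq V] (f : V → ℕ)

lemma sum_pair {a b : V} (hab : a ≠ b) :
    ∑ u ∈ ({a, b} : Finset V), f u = f a + f b := by
  rw [Finset.sum_insert (by simp [hab]), Finset.sum_singleton]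

lemma sum_triple {a b c : V} (hab : a ≠ b) (hac : a ≠ c) (hbc : b ≠ c) :
    ∑ u ∈ ({a, b, c} : Finset V), f u = f a + (f b + f c) := by
  rw [Finset.sum_insert (by simp [hab, hac]), sum_pair f hbc]

lemma sum_quad {a b c d : V} (hab : a ≠ b) (hac : a ≠ c) (had : a ≠ d)
    (hbc : b ≠ c) (hbd : b ≠ d) (hcd : c ≠ d) :
    ∑ u ∈ ({a, b, c, d} : Finset V), f u = f a + (f b + (f c + f d)) := by
  rw [Finset.sum_insert (by simp [hab, hac, had]), sum_triple f hbc hbd hcd]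

lemma sum_six {a b c d e g : V} (hab : a ≠ b) (hac : a ≠ c) (had : a ≠ d) (hae : a ≠ e)
    (hag : a ≠ g) (hbc : b ≠ c) (hbd : b ≠ d) (hbe : b ≠ e) (hbg : b ≠ g)
    (hcd : c ≠ d) (hce : c ≠ e) (hcg : c ≠ g) (hde : d ≠ e) (hdg : d ≠ g) (heg : e ≠ g) :
    ∑ u ∈ ({a, b, c, d, e, g} : Finset V), f u
      = f a + (f b + (f c + (f d + (f e + f g)))) := by
  rw [Finset.sum_insert (by simp [hab, hac, had, hae, hag]),
    Finset.sum_insert (by simp [hbc, hbd, hbe, hbg]), sum_quad f hcd hce hcg hde hdg heg]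

end Sums

section QDefs
variable {V : Type*} [Fintype V]

/-- Odd-after-flip predicate for one added neighbor of color `a`. -/
def Qa (G' : SimpleGraph V) (φ' : V → Fin 5) (x : V) (a : Fin 5) : Prop :=
  ∃ c, Odd (colorCount G' φ' x c + (if a = c then 1 else 0))

/-- Odd-after-flip predicate for two added neighbors of colors `a, b`. -/
def Qab (G' : SimpleGraph V) (φ' : V → Fin 5) (x : V) (a b : Fin 5) : Prop :=
  ∃ c, Odd (colorCount G' φ' x c + ((if a = c then 1 else 0) + (if b = c then 1 else 0)))

/-- Odd-after-flip predicate for three added neighbors of colors `a, b, d`. -/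
def Qabd (G' : SimpleGraph V) (φ' : V → Fin 5) (x : V) (a b d : Fin 5) : Prop :=
  ∃ c, Odd (colorCount G' φ' x c
    + ((if a = c then 1 else 0) + ((if b = c then 1 else 0) + (if d = c then 1 else 0))))

end QDefs
section QHelp
variable {V : Type*} [Fintype V] (G' : SimpleGraph V) (φ' : V → Fin 5) (x : V)

lemma even_of_not_Qa {a : Fin 5} (h : ¬ Qa G' φ' x a) (c : Fin 5) (hca : a ≠ c) :
    Even (colorCount G' φ' x c) := by
  have := not_exists.mp h c
  simp only [hca, if_false, add_zero] at this
  exact Nat.not_odd_iff_even.mp this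

lemma odd_of_not_Qa {a : Fin 5} (h : ¬ Qa G' φ' x a) :
    Odd (colorCount G' φ' x a) := by
  have := not_exists.mp h a
  simp only [eq_self_iff_true, if_true] at this
  rw [Nat.odd_add_one] at this
  exact not_not.mp this

lemma even_of_not_Qab {a b : Fin 5} (h : ¬ Qab G' φ' x a b) (c : Fin 5)
    (hca : a ≠ c) (hcb : b ≠ c) : Even (colorCount G' φ' x c) := by
  have := not_exists.mp h c
  simp only [hca, hcb, if_false, add_zero] at this
  exact Nat.not_odd_iff_even.mp this

lemma even_of_not_Qabd {a b d : Fin 5} (h : ¬ Qabd G' φ' x a b d) (c : Fin 5)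
    (hca : a ≠ c) (hcb : b ≠ c) (hcd : d ≠ c) : Even (colorCount G' φ' x c) := by
  have := not_exists.mp h c
  simp only [hca, hcb, hcd, if_false, add_zero] at this
  exact Nat.not_odd_iff_even.mp this

lemma odd_of_not_Qabd {a b d : Fin 5} (h : ¬ Qabd G' φ' x a b d) (hba : b ≠ a)
    (hda : d ≠ a) : Odd (colorCount G' φ' x a) := by
  have := not_exists.mp h a
  simp only [eq_self_iff_true, if_true, if_neg hba, if_neg hda, add_zero, zero_add] at this
  rw [Nat.odd_add_one] at this
  exact not_not.mp this

lemma Qa_of_even {a : Fin 5} (h : Even (colorCount G' φ' x a)) : Qa G' φ' x a := by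
  obtain ⟨k, hk⟩ := h
  exact ⟨a, by simp only [eq_self_iff_true, if_true]; exact ⟨k, by omega⟩⟩

lemma Qab_of_even_right {a b : Fin 5} (hab : a ≠ b) (h : Even (colorCount G' φ' x b)) :
    Qab G' φ' x a b := by
  obtain ⟨k, hk⟩ := h
  exact ⟨b, by simp only [eq_self_iff_true, if_true, if_neg hab]; exact ⟨k, by omega⟩⟩

lemma Qab_of_even_left {a b : Fin 5} (hba : b ≠ a) (h : Even (colorCount G' φ' x a)) :
    Qab G' φ' x a b := by
  obtain ⟨k, hk⟩ := h
  exact ⟨a, by simp only [eq_self_iff_true, if_true, if_neg hba]; exact ⟨k, by omega⟩⟩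

lemma Qab_of_odd_out {a b c : Fin 5} (hca : a ≠ c) (hcb : b ≠ c)
    (h : Odd (colorCount G' φ' x c)) : Qab G' φ' x a b :=
  ⟨c, by simpa [hca, hcb] using h⟩

lemma Qabd_of_even_first {a b d : Fin 5} (hba : b ≠ a) (hda : d ≠ a)
    (h : Even (colorCount G' φ' x a)) : Qabd G' φ' x a b d := by
  obtain ⟨k, hk⟩ := h
  exact ⟨a, by simp only [eq_self_iff_true, if_true, if_neg hba, if_neg hda]; exact ⟨k, by omega⟩⟩

lemma Qabd_of_even_second {a b d : Fin 5} (hab : a ≠ b) (hdb : d ≠ b)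
    (h : Even (colorCount G' φ' x b)) : Qabd G' φ' x a b d := by
  obtain ⟨k, hk⟩ := h
  exact ⟨b, by simp only [eq_self_iff_true, if_true, if_neg hab, if_neg hdb]; exact ⟨k, by omega⟩⟩

lemma Qabd_of_even_third {a b d : Fin 5} (had : a ≠ d) (hbd : b ≠ d)
    (h : Even (colorCount G' φ' x d)) : Qabd G' φ' x a b d := by
  obtain ⟨k, hk⟩ := h
  exact ⟨d, by simp only [eq_self_iff_true, if_true, if_neg had, if_neg hbd]; exact ⟨k, by omega⟩⟩

lemma Qabd_of_odd_out {a b d c : Fin 5} (hca : a ≠ c) (hcb : b ≠ c) (hcd : d ≠ c)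
    (h : Odd (colorCount G' φ' x c)) : Qabd G' φ' x a b d :=
  ⟨c, by simpa [hca, hcb, hcd] using h⟩

lemma Qabd_of_odd_pair {a c : Fin 5} (hca : a ≠ c)
    (h : Odd (colorCount G' φ' x c)) : Qabd G' φ' x a c c := by
  obtain ⟨k, hk⟩ := h
  exact ⟨c, by simp only [eq_self_iff_true, if_true, if_neg hca]; exact ⟨k + 1, by omega⟩⟩

lemma odd_of_not_Qabd_mid {a b d : Fin 5} (h : ¬ Qabd G' φ' x a b d) (hab : a ≠ b)
    (hdb : d ≠ b) : Odd (colorCount G' φ' x b) := by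
  have := not_exists.mp h b
  simp only [eq_self_iff_true, if_true, if_neg hab, if_neg hdb, add_zero, zero_add] at this
  rw [Nat.odd_add_one] at this
  exact not_not.mp this

lemma odd_of_not_Qabd_third {a b d : Fin 5} (h : ¬ Qabd G' φ' x a b d) (had : a ≠ d)
    (hbd : b ≠ d) : Odd (colorCount G' φ' x d) := by
  have := not_exists.mp h d
  simp only [eq_self_iff_true, if_true, if_neg had, if_neg hbd, add_zero, zero_add] at this
  rw [Nat.odd_add_one] at this
  exact not_not.mp this

end QHelp
section CaseA
variable {V : Type*} [Fintype V] [DecidableEq V]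

lemma caseA_main (G : SimpleGraph V) (v1 v2 v3 u0 w : V)
    (hh : IsEar3 G v1 v2 v3 u0)
    (φ' : V → Fin 5)
    (hφ' : IsOddColoring (GraphDel G ↑({u0} : Finset V)) 5 φ')
    (hw : w = v1 ∨ w = v2 ∨ w = v3) :
    ∃ φ : V → Fin 5, (∀ x ∉ ({u0} : Finset V), φ x = φ' x) ∧ ProperColoring G φ ∧
      ((∃ u, G.Adj w u) → OddAt G φ w) ∧
      (∀ x, x ≠ v1 → x ≠ v2 → x ≠ v3 → (∃ u, G.Adj x u) → OddAt G φ x) := by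
  classical
  set S : Finset V := {u0} with hS
  set G' := GraphDel G ↑S with hG'
  obtain ⟨h12, h23, h13, hN0⟩ := hh
  have hadj0 : ∀ z, G.Adj u0 z ↔ (z = v1 ∨ z = v2 ∨ z = v3) := by
    intro z
    rw [← SimpleGraph.mem_neighborSet, hN0]
    simp [Set.mem_insert_iff]
  have a01 : G.Adj u0 v1 := (hadj0 v1).mpr (Or.inl rfl)
  have a02 : G.Adj u0 v2 := (hadj0 v2).mpr (Or.inr (Or.inl rfl))
  have a03 : G.Adj u0 v3 := (hadj0 v3).mpr (Or.inr (Or.inr rfl))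
  have hv1S : v1 ∉ S := by simp [hS, Ne.symm a01.ne]
  have hv2S : v2 ∉ S := by simp [hS, Ne.symm a02.ne]
  have hv3S : v3 ∉ S := by simp [hS, Ne.symm a03.ne]
  have c12 : φ' v1 ≠ φ' v2 :=
    hφ'.1 _ _ ⟨h12, by simpa using hv1S, by simpa using hv2S⟩
  have c13 : φ' v1 ≠ φ' v3 :=
    hφ'.1 _ _ ⟨h13, by simpa using hv1S, by simpa using hv3S⟩
  have c23 : φ' v2 ≠ φ' v3 :=
    hφ'.1 _ _ ⟨h23, by simpa using hv2S, by simpa using hv3S⟩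
  obtain ⟨p, q, hpq, hp1, hp2, hp3, hq1, hq2, hq3⟩ :=
    exists_two_colors (φ' v1) (φ' v2) (φ' v3) c12 c13 c23
  obtain ⟨a, ha1, ha2, ha3, haQ⟩ :
      ∃ a, a ≠ φ' v1 ∧ a ≠ φ' v2 ∧ a ≠ φ' v3 ∧ Qa G' φ' w a := by
    by_cases h3 : Qa G' φ' w p
    · exact ⟨p, hp1, hp2, hp3, h3⟩
    · exact ⟨q, hq1, hq2, hq3, Qa_of_even G' φ' w (even_of_not_Qa G' φ' w h3 q hpq)⟩
  set φ : V → Fin 5 := fun z => if z = u0 then a else φ' z with hφ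
  have hagree : ∀ x ∉ S, φ x = φ' x := by
    intro x hx
    simp only [hS, Finset.mem_singleton] at hx
    simp [hφ, hx]
  have hφ0 : φ u0 = a := by simp [hφ]
  have hφv1 : φ v1 = φ' v1 := hagree v1 hv1S
  have hφv2 : φ v2 = φ' v2 := hagree v2 hv2S
  have hφv3 : φ v3 = φ' v3 := hagree v3 hv3S
  have hproper : ProperColoring G φ := by
    refine proper_extend G S φ φ' hagree hφ'.1 ?_
    have key : ∀ z ww, G.Adj z ww → z ∈ S → φ z ≠ φ ww := by
      intro z ww hzw hz
      simp only [hS, Finset.mem_singleton] at hz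
      subst hz
      rcases (hadj0 ww).mp hzw with rfl | rfl | rfl
      · rw [hφ0, hφv1]; exact ha1
      · rw [hφ0, hφv2]; exact ha2
      · rw [hφ0, hφv3]; exact ha3
    intro z ww hzw hmem
    rcases hmem with hz | hww
    · exact key z ww hzw hz
    · exact fun h => key ww z hzw.symm hww h.symm
  have hwS : w ∉ S := by rcases hw with rfl | rfl | rfl <;> assumption
  have hwadj : G.Adj w u0 := by rcases hw with rfl | rfl | rfl
    <;> [exact a01.symm; exact a02.symm; exact a03.symm]
  refine ⟨φ, hagree, hproper, ?_, ?_⟩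
  · intro _
    obtain ⟨c, hc⟩ := haQ
    refine ⟨c, ?_⟩
    rw [colorCount_out G S φ φ' hagree w hwS c]
    rw [hS, Finset.sum_singleton]
    simpa [hwadj, hφ0, hG', hS] using hc
  · intro x hx1 hx2 hx3 hni
    by_cases hx0 : x = u0
    · rw [hx0]
      refine ⟨φ' v1, ?_⟩
      rw [colorCount_eq_sum G φ u0 (φ' v1) ({v1, v2, v3} : Finset V) (by rw [hN0]; simp)]
      rw [sum_triple _ h12.ne h13.ne h23.ne]
      rw [hφv1, hφv2, hφv3]
      simp [Ne.symm c12, Ne.symm c13]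
    · refine far_odd G S φ φ' hagree hφ' x (by simp [hS, hx0]) ?_ hni
      intro u hu
      simp only [hS, Finset.mem_singleton] at hu
      subst hu
      intro hadj
      rcases (hadj0 x).mp hadj.symm with rfl | rfl | rfl <;> simp_all

end CaseA
section CaseB
variable {V : Type*} [Fintype V] [DecidableEq V]

lemma caseB_ext (G : SimpleGraph V) (v1 v2 v3 u0 u1 : V)
    (hh : IsOneHat3 G v1 v2 v3 u0 u1) (hu1v3 : u1 ≠ v3)
    (φ' : V → Fin 5)
    (hφ' : IsOddColoring (GraphDel G ↑({u0, u1} : Finset V)) 5 φ')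
    (a b : Fin 5)
    (ha1 : a ≠ φ' v1) (ha2 : a ≠ φ' v2) (ha3 : a ≠ φ' v3)
    (hb1 : b ≠ φ' v1) (hb2 : b ≠ φ' v2) (hab : a ≠ b) :
    ∃ φ : V → Fin 5, (∀ x ∉ ({u0, u1} : Finset V), φ x = φ' x) ∧ ProperColoring G φ ∧
      (∀ x, x ≠ v1 → x ≠ v2 → x ≠ v3 → (∃ u, G.Adj x u) → OddAt G φ x) ∧
      (Qab (GraphDel G ↑({u0, u1} : Finset V)) φ' v1 a b → OddAt G φ v1) ∧
      (Qab (GraphDel G ↑({u0, u1} : Finset V)) φ' v2 a b → OddAt G φ v2) ∧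
      (Qa (GraphDel G ↑({u0, u1} : Finset V)) φ' v3 a → OddAt G φ v3) := by
  classical
  obtain ⟨h12, h23, h13, hN0, hN1⟩ := hh
  set S : Finset V := {u0, u1} with hS
  -- adjacency characterizations
  have hadj0 : ∀ z, G.Adj u0 z ↔ (z = v1 ∨ z = v2 ∨ z = v3 ∨ z = u1) := by
    intro z
    rw [← SimpleGraph.mem_neighborSet, hN0]
    simp [Set.mem_insert_iff]
  have hadj1 : ∀ z, G.Adj u1 z ↔ (z = v1 ∨ z = v2 ∨ z = u0) := by
    intro z
    rw [← SimpleGraph.mem_neighborSet, hN1]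
    simp [Set.mem_insert_iff]
  -- basic adjacencies
  have a01 : G.Adj u0 v1 := (hadj0 v1).mpr (Or.inl rfl)
  have a02 : G.Adj u0 v2 := (hadj0 v2).mpr (Or.inr (Or.inl rfl))
  have a03 : G.Adj u0 v3 := (hadj0 v3).mpr (Or.inr (Or.inr (Or.inl rfl)))
  have a0u1 : G.Adj u0 u1 := (hadj0 u1).mpr (Or.inr (Or.inr (Or.inr rfl)))
  have a11 : G.Adj u1 v1 := (hadj1 v1).mpr (Or.inl rfl)
  have a12 : G.Adj u1 v2 := (hadj1 v2).mpr (Or.inr (Or.inl rfl))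
  -- distinctness
  have n01 : u0 ≠ v1 := a01.ne
  have n02 : u0 ≠ v2 := a02.ne
  have n03 : u0 ≠ v3 := a03.ne
  have n0u1 : u0 ≠ u1 := a0u1.ne
  have n11 : u1 ≠ v1 := a11.ne
  have n12 : u1 ≠ v2 := a12.ne
  have nv12 : v1 ≠ v2 := h12.ne
  have nv23 : v2 ≠ v3 := h23.ne
  have nv13 : v1 ≠ v3 := h13.ne
  have hv1S : v1 ∉ S := by simp [hS, Ne.symm n01, Ne.symm n11]
  have hv2S : v2 ∉ S := by simp [hS, Ne.symm n02, Ne.symm n12]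
  have hv3S : v3 ∉ S := by simp [hS, Ne.symm n03, Ne.symm hu1v3]
  -- non-adjacency
  have nadj13 : ¬ G.Adj u1 v3 := by
    rw [hadj1]; push_neg
    exact ⟨Ne.symm nv13, Ne.symm nv23, Ne.symm n03⟩
  -- colors of the triangle are pairwise distinct
  have e12 : (GraphDel G ↑S).Adj v1 v2 := ⟨h12, by simpa using hv1S, by simpa using hv2S⟩
  have e13 : (GraphDel G ↑S).Adj v1 v3 := ⟨h13, by simpa using hv1S, by simpa using hv3S⟩
  have e23 : (GraphDel G ↑S).Adj v2 v3 := ⟨h23, by simpa using hv2S, by simpa using hv3S⟩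
  have c12 : φ' v1 ≠ φ' v2 := hφ'.1 _ _ e12
  have c13 : φ' v1 ≠ φ' v3 := hφ'.1 _ _ e13
  have c23 : φ' v2 ≠ φ' v3 := hφ'.1 _ _ e23
  -- the coloring
  set φ : V → Fin 5 := fun z => if z = u0 then a else if z = u1 then b else φ' z with hφ
  have hagree : ∀ x ∉ S, φ x = φ' x := by
    intro x hx
    simp only [hS, Finset.mem_insert, Finset.mem_singleton] at hx
    push_neg at hx
    simp [hφ, hx.1, hx.2]
  have hφ0 : φ u0 = a := by simp [hφ]
  have hφ1 : φ u1 = b := by simp [hφ, Ne.symm n0u1]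
  have hφv1 : φ v1 = φ' v1 := hagree v1 hv1S
  have hφv2 : φ v2 = φ' v2 := hagree v2 hv2S
  have hφv3 : φ v3 = φ' v3 := hagree v3 hv3S
  -- properness
  have hproper : ProperColoring G φ := by
    refine proper_extend G S φ φ' hagree hφ'.1 ?_
    have key : ∀ z w, G.Adj z w → z ∈ S → φ z ≠ φ w := by
      intro z w hzw hz
      simp only [hS, Finset.mem_insert, Finset.mem_singleton] at hz
      rcases hz with rfl | rfl
      · rcases (hadj0 w).mp hzw with rfl | rfl | rfl | rfl
        · rw [hφ0, hφv1]; exact ha1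
        · rw [hφ0, hφv2]; exact ha2
        · rw [hφ0, hφv3]; exact ha3
        · rw [hφ0, hφ1]; exact hab
      · rcases (hadj1 w).mp hzw with rfl | rfl | rfl
        · rw [hφ1, hφv1]; exact hb1
        · rw [hφ1, hφv2]; exact hb2
        · rw [hφ1, hφ0]; exact Ne.symm hab
    intro z w hzw hmem
    rcases hmem with hz | hw
    · exact key z w hzw hz
    · exact fun h => key w z hzw.symm hw h.symm
  refine ⟨φ, hagree, hproper, ?_, ?_, ?_, ?_⟩
  · -- far vertices, u0 and u1
    intro x hx1 hx2 hx3 hni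
    by_cases hx0 : x = u0
    · rw [hx0]
      refine ⟨φ' v1, ?_⟩
      rw [colorCount_eq_sum G φ u0 (φ' v1) ({v1, v2, v3, u1} : Finset V) (by rw [hN0]; simp)]
      rw [sum_quad _ nv12 nv13 (Ne.symm n11) nv23 (Ne.symm n12) (Ne.symm hu1v3)]
      rw [hφv1, hφv2, hφv3, hφ1]
      simp [Ne.symm c12, Ne.symm c13, hb1]
    by_cases hxu1 : x = u1
    · rw [hxu1]
      refine ⟨φ' v1, ?_⟩
      rw [colorCount_eq_sum G φ u1 (φ' v1) ({v1, v2, u0} : Finset V) (by rw [hN1]; simp)]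
      rw [sum_triple _ nv12 (Ne.symm n01) (Ne.symm n02)]
      rw [hφv1, hφv2, hφ0]
      simp [Ne.symm c12, ha1]
    · have hxS : x ∉ S := by simp [hS, hx0, hxu1]
      refine far_odd G S φ φ' hagree hφ' x hxS ?_ hni
      intro u hu
      simp only [hS, Finset.mem_insert, Finset.mem_singleton] at hu
      rcases hu with rfl | rfl
      · intro hadj
        rcases (hadj0 x).mp hadj.symm with rfl | rfl | rfl | rfl <;> simp_all
      · intro hadj
        rcases (hadj1 x).mp hadj.symm with rfl | rfl | rfl <;> simp_all
  · -- v1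
    rintro ⟨c, hc⟩
    refine ⟨c, ?_⟩
    rw [colorCount_out G S φ φ' hagree v1 hv1S c]
    rw [sum_pair _ n0u1]
    have A1 : G.Adj v1 u0 := a01.symm
    have A2 : G.Adj v1 u1 := a11.symm
    simpa [A1, A2, hφ0, hφ1] using hc
  · -- v2
    rintro ⟨c, hc⟩
    refine ⟨c, ?_⟩
    rw [colorCount_out G S φ φ' hagree v2 hv2S c]
    rw [sum_pair _ n0u1]
    have A1 : G.Adj v2 u0 := a02.symm
    have A2 : G.Adj v2 u1 := a12.symm
    simpa [A1, A2, hφ0, hφ1] using hc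
  · -- v3
    rintro ⟨c, hc⟩
    refine ⟨c, ?_⟩
    rw [colorCount_out G S φ φ' hagree v3 hv3S c]
    rw [sum_pair _ n0u1]
    have A1 : G.Adj v3 u0 := a03.symm
    have A2 : ¬ G.Adj v3 u1 := fun h => nadj13 h.symm
    simpa [A1, A2, hφ0, hφ1] using hc

end CaseB
section CaseBMain
variable {V : Type*} [Fintype V] [DecidableEq V]

lemma caseB_main (G : SimpleGraph V) (v1 v2 v3 u0 u1 t : V)
    (hh : IsOneHat3 G v1 v2 v3 u0 u1) (hu1v3 : u1 ≠ v3)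
    (φ' : V → Fin 5)
    (hφ' : IsOddColoring (GraphDel G ↑({u0, u1} : Finset V)) 5 φ')
    (ht : t = v1 ∨ t = v2 ∨ t = v3) :
    ∃ φ : V → Fin 5, (∀ x ∉ ({u0, u1} : Finset V), φ x = φ' x) ∧ ProperColoring G φ ∧
      ∀ x, x ≠ t → (∃ u, G.Adj x u) → OddAt G φ x := by
  classical
  set S : Finset V := {u0, u1} with hS
  set G' := GraphDel G ↑S with hG'
  obtain ⟨h12, h23, h13, hN0, hN1⟩ := hh
  have a01 : G.Adj u0 v1 := by
    rw [← SimpleGraph.mem_neighborSet, hN0]; simp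
  have a02 : G.Adj u0 v2 := by
    rw [← SimpleGraph.mem_neighborSet, hN0]; simp
  have a03 : G.Adj u0 v3 := by
    rw [← SimpleGraph.mem_neighborSet, hN0]; simp
  have a11 : G.Adj u1 v1 := by
    rw [← SimpleGraph.mem_neighborSet, hN1]; simp
  have a12 : G.Adj u1 v2 := by
    rw [← SimpleGraph.mem_neighborSet, hN1]; simp
  have hv1S : v1 ∉ S := by simp [hS, Ne.symm a01.ne, Ne.symm a11.ne]
  have hv2S : v2 ∉ S := by simp [hS, Ne.symm a02.ne, Ne.symm a12.ne]
  have hv3S : v3 ∉ S := by simp [hS, Ne.symm a03.ne, Ne.symm hu1v3]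
  have c12 : φ' v1 ≠ φ' v2 :=
    hφ'.1 _ _ ⟨h12, by simpa using hv1S, by simpa using hv2S⟩
  have c13 : φ' v1 ≠ φ' v3 :=
    hφ'.1 _ _ ⟨h13, by simpa using hv1S, by simpa using hv3S⟩
  have c23 : φ' v2 ≠ φ' v3 :=
    hφ'.1 _ _ ⟨h23, by simpa using hv2S, by simpa using hv3S⟩
  obtain ⟨p, q, hpq, hp1, hp2, hp3, hq1, hq2, hq3⟩ :=
    exists_two_colors (φ' v1) (φ' v2) (φ' v3) c12 c13 c23
  have hOH : IsOneHat3 G v1 v2 v3 u0 u1 := ⟨h12, h23, h13, hN0, hN1⟩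
  -- helper to finish from caseB_ext
  rcases ht with hteq | hteq | hteq
  · -- exclude v1 : need Qab v2 a b and Qa v3 a
    obtain ⟨aa, haa1, haa2, haa3, haaQ⟩ :
        ∃ aa, aa ≠ φ' v1 ∧ aa ≠ φ' v2 ∧ aa ≠ φ' v3 ∧ Qa G' φ' v3 aa := by
      by_cases h3 : Qa G' φ' v3 p
      · exact ⟨p, hp1, hp2, hp3, h3⟩
      · exact ⟨q, hq1, hq2, hq3, Qa_of_even G' φ' v3 (even_of_not_Qa G' φ' v3 h3 q hpq)⟩
    obtain ⟨bb, hbb1, hbb2, hbbne, hbbQ⟩ :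
        ∃ bb, bb ≠ φ' v1 ∧ bb ≠ φ' v2 ∧ aa ≠ bb ∧ Qab G' φ' v2 aa bb := by
      by_cases hq2' : Qab G' φ' v2 aa (φ' v3)
      · exact ⟨φ' v3, Ne.symm c13, Ne.symm c23, haa3, hq2'⟩
      · obtain ⟨w, hw1, hw2, hw3, hwa⟩ : ∃ w, w ≠ φ' v1 ∧ w ≠ φ' v2 ∧ w ≠ φ' v3 ∧ aa ≠ w := by
          by_cases haap : aa = p
          · exact ⟨q, hq1, hq2, hq3, haap ▸ hpq⟩
          · exact ⟨p, hp1, hp2, hp3, haap⟩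
        exact ⟨w, hw1, hw2, hwa,
          Qab_of_even_right G' φ' v2 hwa (even_of_not_Qab G' φ' v2 hq2' w hwa (Ne.symm hw3))⟩
    obtain ⟨φ, hag, hprop, hfar, _, hv2, hv3⟩ :=
      caseB_ext G v1 v2 v3 u0 u1 hOH hu1v3 φ' hφ' aa bb haa1 haa2 haa3 hbb1 hbb2 hbbne
    refine ⟨φ, hag, hprop, ?_⟩
    intro x hx hni
    have hx1 : x ≠ v1 := hteq ▸ hx
    by_cases hx2 : x = v2
    · exact hx2 ▸ hv2 hbbQ
    by_cases hx3 : x = v3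
    · exact hx3 ▸ hv3 haaQ
    exact hfar x hx1 hx2 hx3 hni
  · -- exclude v2 : need Qab v1 a b and Qa v3 a
    obtain ⟨aa, haa1, haa2, haa3, haaQ⟩ :
        ∃ aa, aa ≠ φ' v1 ∧ aa ≠ φ' v2 ∧ aa ≠ φ' v3 ∧ Qa G' φ' v3 aa := by
      by_cases h3 : Qa G' φ' v3 p
      · exact ⟨p, hp1, hp2, hp3, h3⟩
      · exact ⟨q, hq1, hq2, hq3, Qa_of_even G' φ' v3 (even_of_not_Qa G' φ' v3 h3 q hpq)⟩
    obtain ⟨bb, hbb1, hbb2, hbbne, hbbQ⟩ :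
        ∃ bb, bb ≠ φ' v1 ∧ bb ≠ φ' v2 ∧ aa ≠ bb ∧ Qab G' φ' v1 aa bb := by
      by_cases hq1' : Qab G' φ' v1 aa (φ' v3)
      · exact ⟨φ' v3, Ne.symm c13, Ne.symm c23, haa3, hq1'⟩
      · obtain ⟨w, hw1, hw2, hw3, hwa⟩ : ∃ w, w ≠ φ' v1 ∧ w ≠ φ' v2 ∧ w ≠ φ' v3 ∧ aa ≠ w := by
          by_cases haap : aa = p
          · exact ⟨q, hq1, hq2, hq3, haap ▸ hpq⟩
          · exact ⟨p, hp1, hp2, hp3, haap⟩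
        exact ⟨w, hw1, hw2, hwa,
          Qab_of_even_right G' φ' v1 hwa (even_of_not_Qab G' φ' v1 hq1' w hwa (Ne.symm hw3))⟩
    obtain ⟨φ, hag, hprop, hfar, hv1, _, hv3⟩ :=
      caseB_ext G v1 v2 v3 u0 u1 hOH hu1v3 φ' hφ' aa bb haa1 haa2 haa3 hbb1 hbb2 hbbne
    refine ⟨φ, hag, hprop, ?_⟩
    intro x hx hni
    have hx2 : x ≠ v2 := hteq ▸ hx
    by_cases hx1 : x = v1
    · exact hx1 ▸ hv1 hbbQ
    by_cases hx3 : x = v3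
    · exact hx3 ▸ hv3 haaQ
    exact hfar x hx1 hx2 hx3 hni
  · -- exclude v3 : need Qab v1 a b and Qab v2 a b
    obtain ⟨aa, bb, haa1, haa2, haa3, hbb1, hbb2, hbbne, hQ1, hQ2⟩ :
        ∃ aa bb, aa ≠ φ' v1 ∧ aa ≠ φ' v2 ∧ aa ≠ φ' v3 ∧ bb ≠ φ' v1 ∧ bb ≠ φ' v2 ∧
          aa ≠ bb ∧ Qab G' φ' v1 aa bb ∧ Qab G' φ' v2 aa bb := by
      by_cases hA1 : Qab G' φ' v1 p (φ' v3)
      · by_cases hA2 : Qab G' φ' v2 p (φ' v3)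
        · exact ⟨p, φ' v3, hp1, hp2, hp3, Ne.symm c13, Ne.symm c23, hp3, hA1, hA2⟩
        · by_cases hB1 : Qab G' φ' v1 p q
          · exact ⟨p, q, hp1, hp2, hp3, hq1, hq2, hpq, hB1,
              Qab_of_even_right G' φ' v2 hpq (even_of_not_Qab G' φ' v2 hA2 q hpq (Ne.symm hq3))⟩
          · exact ⟨q, φ' v3, hq1, hq2, hq3, Ne.symm c13, Ne.symm c23, hq3,
              Qab_of_even_right G' φ' v1 hq3
                (even_of_not_Qab G' φ' v1 hB1 (φ' v3) hp3 hq3),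
              Qab_of_even_left G' φ' v2 (Ne.symm hq3)
                (even_of_not_Qab G' φ' v2 hA2 q hpq (Ne.symm hq3))⟩
      · by_cases hB2 : Qab G' φ' v2 p q
        · exact ⟨p, q, hp1, hp2, hp3, hq1, hq2, hpq,
            Qab_of_even_right G' φ' v1 hpq (even_of_not_Qab G' φ' v1 hA1 q hpq (Ne.symm hq3)), hB2⟩
        · exact ⟨q, φ' v3, hq1, hq2, hq3, Ne.symm c13, Ne.symm c23, hq3,
            Qab_of_even_left G' φ' v1 (Ne.symm hq3)
              (even_of_not_Qab G' φ' v1 hA1 q hpq (Ne.symm hq3)),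
            Qab_of_even_right G' φ' v2 hq3
              (even_of_not_Qab G' φ' v2 hB2 (φ' v3) hp3 hq3)⟩
    obtain ⟨φ, hag, hprop, hfar, hv1, hv2, _⟩ :=
      caseB_ext G v1 v2 v3 u0 u1 hOH hu1v3 φ' hφ' aa bb haa1 haa2 haa3 hbb1 hbb2 hbbne
    refine ⟨φ, hag, hprop, ?_⟩
    intro x hx hni
    have hx3 : x ≠ v3 := hteq ▸ hx
    by_cases hx1 : x = v1
    · exact hx1 ▸ hv1 hQ1
    by_cases hx2 : x = v2
    · exact hx2 ▸ hv2 hQ2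
    exact hfar x hx1 hx2 hx3 hni
end CaseBMain
section CaseC
variable {V : Type*} [Fintype V] [DecidableEq V]

lemma caseC_main (G : SimpleGraph V) (v1 v2 v3 u0 : V)
    (hh : IsOneHat3 G v1 v2 v3 u0 v3)
    (φ' : V → Fin 5)
    (hφ' : IsOddColoring (GraphDel G ↑({u0, v3} : Finset V)) 5 φ') :
    ∃ φ : V → Fin 5, (∀ x ∉ ({u0, v3} : Finset V), φ x = φ' x) ∧ ProperColoring G φ ∧
      ∀ x, (∃ u, G.Adj x u) → OddAt G φ x := by
  classical
  set S : Finset V := {u0, v3} with hS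
  set G' := GraphDel G ↑S with hG'
  obtain ⟨h12, h23, h13, hN0, hN1⟩ := hh
  have hadj0 : ∀ z, G.Adj u0 z ↔ (z = v1 ∨ z = v2 ∨ z = v3) := by
    intro z
    rw [← SimpleGraph.mem_neighborSet, hN0]
    simp [Set.mem_insert_iff]
  have hadj3 : ∀ z, G.Adj v3 z ↔ (z = v1 ∨ z = v2 ∨ z = u0) := by
    intro z
    rw [← SimpleGraph.mem_neighborSet, hN1]
    simp [Set.mem_insert_iff]
  have a01 : G.Adj u0 v1 := (hadj0 v1).mpr (Or.inl rfl)
  have a02 : G.Adj u0 v2 := (hadj0 v2).mpr (Or.inr (Or.inl rfl))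
  have a03 : G.Adj u0 v3 := (hadj0 v3).mpr (Or.inr (Or.inr rfl))
  have hv1S : v1 ∉ S := by simp [hS, Ne.symm a01.ne, h13.ne]
  have hv2S : v2 ∉ S := by simp [hS, Ne.symm a02.ne, h23.ne]
  have c12 : φ' v1 ≠ φ' v2 :=
    hφ'.1 _ _ ⟨h12, by simpa using hv1S, by simpa using hv2S⟩
  obtain ⟨p, q, r, hpq, hpr, hqr, hp1, hp2, hq1, hq2, hr1, hr2⟩ :=
    exists_three_colors (φ' v1) (φ' v2) c12
  obtain ⟨a, b, ha1, ha2, hb1, hb2, hab, hQ1, hQ2⟩ :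
      ∃ a b, a ≠ φ' v1 ∧ a ≠ φ' v2 ∧ b ≠ φ' v1 ∧ b ≠ φ' v2 ∧ a ≠ b ∧
        Qab G' φ' v1 a b ∧ Qab G' φ' v2 a b := by
    by_cases A1 : Qab G' φ' v1 p q
    · by_cases A2 : Qab G' φ' v2 p q
      · exact ⟨p, q, hp1, hp2, hq1, hq2, hpq, A1, A2⟩
      · by_cases B1 : Qab G' φ' v1 p r
        · exact ⟨p, r, hp1, hp2, hr1, hr2, hpr, B1,
            Qab_of_even_right G' φ' v2 hpr (even_of_not_Qab G' φ' v2 A2 r hpr hqr)⟩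
        · exact ⟨q, r, hq1, hq2, hr1, hr2, hqr,
            Qab_of_even_left G' φ' v1 (Ne.symm hqr)
              (even_of_not_Qab G' φ' v1 B1 q hpq (Ne.symm hqr)),
            Qab_of_even_right G' φ' v2 hqr (even_of_not_Qab G' φ' v2 A2 r hpr hqr)⟩
    · by_cases B2 : Qab G' φ' v2 p r
      · exact ⟨p, r, hp1, hp2, hr1, hr2, hpr,
          Qab_of_even_right G' φ' v1 hpr (even_of_not_Qab G' φ' v1 A1 r hpr hqr), B2⟩
      · exact ⟨q, r, hq1, hq2, hr1, hr2, hqr,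
          Qab_of_even_right G' φ' v1 hqr (even_of_not_Qab G' φ' v1 A1 r hpr hqr),
          Qab_of_even_left G' φ' v2 (Ne.symm hqr)
            (even_of_not_Qab G' φ' v2 B2 q hpq (Ne.symm hqr))⟩
  set φ : V → Fin 5 := fun z => if z = u0 then a else if z = v3 then b else φ' z with hφ
  have hagree : ∀ x ∉ S, φ x = φ' x := by
    intro x hx
    simp only [hS, Finset.mem_insert, Finset.mem_singleton] at hx
    push_neg at hx
    simp [hφ, hx.1, hx.2]
  have hφ0 : φ u0 = a := by simp [hφ]
  have hφ3 : φ v3 = b := by simp [hφ, Ne.symm a03.ne]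
  have hφv1 : φ v1 = φ' v1 := hagree v1 hv1S
  have hφv2 : φ v2 = φ' v2 := hagree v2 hv2S
  have hproper : ProperColoring G φ := by
    refine proper_extend G S φ φ' hagree hφ'.1 ?_
    have key : ∀ z w, G.Adj z w → z ∈ S → φ z ≠ φ w := by
      intro z w hzw hz
      simp only [hS, Finset.mem_insert, Finset.mem_singleton] at hz
      rcases hz with rfl | rfl
      · rcases (hadj0 w).mp hzw with rfl | rfl | rfl
        · rw [hφ0, hφv1]; exact ha1
        · rw [hφ0, hφv2]; exact ha2
        · rw [hφ0, hφ3]; exact hab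
      · rcases (hadj3 w).mp hzw with rfl | rfl | rfl
        · rw [hφ3, hφv1]; exact hb1
        · rw [hφ3, hφv2]; exact hb2
        · rw [hφ3, hφ0]; exact Ne.symm hab
    intro z w hzw hmem
    rcases hmem with hz | hw
    · exact key z w hzw hz
    · exact fun h => key w z hzw.symm hw h.symm
  refine ⟨φ, hagree, hproper, ?_⟩
  intro x hni
  by_cases hx0 : x = u0
  · rw [hx0]
    refine ⟨φ' v1, ?_⟩
    rw [colorCount_eq_sum G φ u0 (φ' v1) ({v1, v2, v3} : Finset V)
      (by rw [hN0]; ext z; simp)]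
    rw [sum_triple _ h12.ne h13.ne h23.ne]
    rw [hφv1, hφv2, hφ3]
    simp [Ne.symm c12, hb1]
  by_cases hx3 : x = v3
  · rw [hx3]
    refine ⟨φ' v1, ?_⟩
    rw [colorCount_eq_sum G φ v3 (φ' v1) ({v1, v2, u0} : Finset V) (by rw [hN1]; simp)]
    rw [sum_triple _ h12.ne (Ne.symm a01.ne) (Ne.symm a02.ne)]
    rw [hφv1, hφv2, hφ0]
    simp [Ne.symm c12, ha1]
  by_cases hx1 : x = v1
  · rw [hx1]
    obtain ⟨c, hc⟩ := hQ1
    refine ⟨c, ?_⟩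
    rw [colorCount_out G S φ φ' hagree v1 hv1S c]
    rw [hS, sum_pair _ a03.ne]
    have A1 : G.Adj v1 u0 := a01.symm
    have A2 : G.Adj v1 v3 := h13
    simpa [A1, A2, hφ0, hφ3, hG', hS] using hc
  by_cases hx2 : x = v2
  · rw [hx2]
    obtain ⟨c, hc⟩ := hQ2
    refine ⟨c, ?_⟩
    rw [colorCount_out G S φ φ' hagree v2 hv2S c]
    rw [hS, sum_pair _ a03.ne]
    have A1 : G.Adj v2 u0 := a02.symm
    have A2 : G.Adj v2 v3 := h23
    simpa [A1, A2, hφ0, hφ3, hG', hS] using hc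
  · refine far_odd G S φ φ' hagree hφ' x (by simp [hS, hx0, hx3]) ?_ hni
    intro u hu
    simp only [hS, Finset.mem_insert, Finset.mem_singleton] at hu
    rcases hu with rfl | rfl
    · intro hadj
      rcases (hadj0 x).mp hadj.symm with rfl | rfl | rfl <;> simp_all
    · intro hadj
      rcases (hadj3 x).mp hadj.symm with rfl | rfl | rfl <;> simp_all

end CaseC
section CaseE
variable {V : Type*} [Fintype V] [DecidableEq V]

lemma caseE_main (G : SimpleGraph V) (v1 v2 v3 u0 : V)
    (hh : IsOneHatPlus3 G v1 v2 v3 u0 v3 v1 v2)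
    (φ' : V → Fin 5)
    (hφ' : IsOddColoring (GraphDel G ↑({u0, v3, v1, v2} : Finset V)) 5 φ') :
    ∃ φ : V → Fin 5, (∀ x ∉ ({u0, v3, v1, v2} : Finset V), φ x = φ' x) ∧ ProperColoring G φ ∧
      ∀ x, (∃ u, G.Adj x u) → OddAt G φ x := by
  classical
  set S : Finset V := {u0, v3, v1, v2} with hS
  obtain ⟨h12, h23, h13, hN0, hN1, hN2, hN3⟩ := hh
  have hadj0 : ∀ z, G.Adj u0 z ↔ (z = v1 ∨ z = v2 ∨ z = v3) := by
    intro z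
    rw [← SimpleGraph.mem_neighborSet, hN0]
    simp [Set.mem_insert_iff]
    tauto
  have hadj1 : ∀ z, G.Adj v3 z ↔ (z = v1 ∨ z = v2 ∨ z = u0) := by
    intro z
    rw [← SimpleGraph.mem_neighborSet, hN1]
    simp [Set.mem_insert_iff]
    tauto
  have hadj2 : ∀ z, G.Adj v1 z ↔ (z = v2 ∨ z = v3 ∨ z = u0) := by
    intro z
    rw [← SimpleGraph.mem_neighborSet, hN2]
    simp [Set.mem_insert_iff]
  have hadj3 : ∀ z, G.Adj v2 z ↔ (z = v1 ∨ z = u0 ∨ z = v3) := by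
    intro z
    rw [← SimpleGraph.mem_neighborSet, hN3]
    simp [Set.mem_insert_iff]
  have a01 : G.Adj u0 v1 := (hadj0 v1).mpr (Or.inl rfl)
  have a02 : G.Adj u0 v2 := (hadj0 v2).mpr (Or.inr (Or.inl rfl))
  have a03 : G.Adj u0 v3 := (hadj0 v3).mpr (Or.inr (Or.inr rfl))
  have n01 : u0 ≠ v1 := a01.ne
  have n02 : u0 ≠ v2 := a02.ne
  have n03 : u0 ≠ v3 := a03.ne
  set φ : V → Fin 5 := fun z =>
    if z = u0 then 0 else if z = v1 then 1 else if z = v2 then 2 else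
      if z = v3 then 3 else φ' z with hφ
  have hφ0 : φ u0 = 0 := by simp [hφ]
  have hφ1 : φ v1 = 1 := by simp [hφ, Ne.symm n01]
  have hφ2 : φ v2 = 2 := by simp [hφ, Ne.symm n02, Ne.symm h12.ne]
  have hφ3 : φ v3 = 3 := by simp [hφ, Ne.symm n03, Ne.symm h13.ne, Ne.symm h23.ne]
  have hagree : ∀ x ∉ S, φ x = φ' x := by
    intro x hx
    simp only [hS, Finset.mem_insert, Finset.mem_singleton] at hx
    push_neg at hx
    simp [hφ, hx.1, hx.2.1, hx.2.2.1, hx.2.2.2]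
  have hproper : ProperColoring G φ := by
    refine proper_extend G S φ φ' hagree hφ'.1 ?_
    have key : ∀ z w, G.Adj z w → z ∈ S → φ z ≠ φ w := by
      intro z w hzw hz
      simp only [hS, Finset.mem_insert, Finset.mem_singleton] at hz
      rcases hz with rfl | rfl | rfl | rfl
      · rcases (hadj0 w).mp hzw with rfl | rfl | rfl <;>
          simp [hφ0, hφ1, hφ2, hφ3]
      · rcases (hadj1 w).mp hzw with rfl | rfl | rfl <;>
          simp [hφ0, hφ1, hφ2, hφ3]
      · rcases (hadj2 w).mp hzw with rfl | rfl | rfl <;>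
          simp [hφ0, hφ1, hφ2, hφ3]
      · rcases (hadj3 w).mp hzw with rfl | rfl | rfl <;>
          simp [hφ0, hφ1, hφ2, hφ3]
    intro z w hzw hmem
    rcases hmem with hz | hw
    · exact key z w hzw hz
    · exact fun h => key w z hzw.symm hw h.symm
  refine ⟨φ, hagree, hproper, ?_⟩
  intro x hni
  by_cases hx0 : x = u0
  · rw [hx0]
    refine ⟨1, ?_⟩
    rw [colorCount_eq_sum G φ u0 1 ({v1, v2, v3} : Finset V) (by rw [hN0]; ext z; simp; tauto)]
    rw [sum_triple _ h12.ne h13.ne h23.ne, hφ1, hφ2, hφ3]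
    decide
  by_cases hx3 : x = v3
  · rw [hx3]
    refine ⟨1, ?_⟩
    rw [colorCount_eq_sum G φ v3 1 ({v1, v2, u0} : Finset V) (by rw [hN1]; ext z; simp; tauto)]
    rw [sum_triple _ h12.ne (Ne.symm n01) (Ne.symm n02), hφ1, hφ2, hφ0]
    decide
  by_cases hx1 : x = v1
  · rw [hx1]
    refine ⟨2, ?_⟩
    rw [colorCount_eq_sum G φ v1 2 ({v2, v3, u0} : Finset V) (by rw [hN2]; ext z; simp)]
    rw [sum_triple _ h23.ne (Ne.symm n02) (Ne.symm n03), hφ2, hφ3, hφ0]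
    decide
  by_cases hx2 : x = v2
  · rw [hx2]
    refine ⟨1, ?_⟩
    rw [colorCount_eq_sum G φ v2 1 ({v1, u0, v3} : Finset V) (by rw [hN3]; ext z; simp)]
    rw [sum_triple _ (Ne.symm n01) h13.ne n03, hφ1, hφ0, hφ3]
    decide
  · refine far_odd G S φ φ' hagree hφ' x (by simp [hS, hx0, hx1, hx2, hx3]) ?_ hni
    intro u hu
    simp only [hS, Finset.mem_insert, Finset.mem_singleton] at hu
    rcases hu with rfl | rfl | rfl | rfl
    · intro hadj
      rcases (hadj0 x).mp hadj.symm with rfl | rfl | rfl <;> simp_all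
    · intro hadj
      rcases (hadj1 x).mp hadj.symm with rfl | rfl | rfl <;> simp_all
    · intro hadj
      rcases (hadj2 x).mp hadj.symm with rfl | rfl | rfl <;> simp_all
    · intro hadj
      rcases (hadj3 x).mp hadj.symm with rfl | rfl | rfl <;> simp_all

end CaseE
section CaseD
variable {V : Type*} [Fintype V] [DecidableEq V]

lemma caseD_ext (G : SimpleGraph V) (v1 v2 v3 u0 u1 u2 u3 : V)
    (hh : IsOneHatPlus3 G v1 v2 v3 u0 u1 u2 u3) (hu1v3 : u1 ≠ v3)
    (φ' : V → Fin 5)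
    (hφ' : IsOddColoring (GraphDel G ↑({u0, u1, u2, u3} : Finset V)) 5 φ')
    (a0 a1 a2 a3 : Fin 5)
    (h01 : a0 ≠ φ' v1) (h02 : a0 ≠ φ' v2) (h03 : a0 ≠ φ' v3)
    (h0a1 : a0 ≠ a1) (h0a2 : a0 ≠ a2) (h0a3 : a0 ≠ a3)
    (h11 : a1 ≠ φ' v1) (h12c : a1 ≠ φ' v2) (h1a3 : a1 ≠ a3)
    (h22 : a2 ≠ φ' v2) (h23c : a2 ≠ φ' v3)
    (h31 : a3 ≠ φ' v1)
    (hu0odd : ∃ c, Odd ((if φ' v1 = c then 1 else 0) + ((if φ' v2 = c then 1 else 0) +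
      ((if φ' v3 = c then 1 else 0) + ((if a1 = c then 1 else 0) +
      ((if a2 = c then 1 else 0) + (if a3 = c then 1 else 0))))))) :
    ∃ φ : V → Fin 5, (∀ x ∉ ({u0, u1, u2, u3} : Finset V), φ x = φ' x) ∧ ProperColoring G φ ∧
      (∀ x, x ≠ v1 → x ≠ v2 → x ≠ v3 → (∃ u, G.Adj x u) → OddAt G φ x) ∧
      (Qabd (GraphDel G ↑({u0, u1, u2, u3} : Finset V)) φ' v1 a0 a1 a3 → OddAt G φ v1) ∧
      (Qabd (GraphDel G ↑({u0, u1, u2, u3} : Finset V)) φ' v2 a0 a1 a2 → OddAt G φ v2) ∧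
      (Qab (GraphDel G ↑({u0, u1, u2, u3} : Finset V)) φ' v3 a0 a2 → OddAt G φ v3) := by
  classical
  obtain ⟨h12, h23, h13, hN0, hN1, hN2, hN3⟩ := hh
  set S : Finset V := {u0, u1, u2, u3} with hS
  have hadj0 : ∀ z, G.Adj u0 z ↔ (z = v1 ∨ z = v2 ∨ z = v3 ∨ z = u1 ∨ z = u2 ∨ z = u3) := by
    intro z
    rw [← SimpleGraph.mem_neighborSet, hN0]
    simp [Set.mem_insert_iff]
  have hadj1 : ∀ z, G.Adj u1 z ↔ (z = v1 ∨ z = v2 ∨ z = u0 ∨ z = u3) := by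
    intro z
    rw [← SimpleGraph.mem_neighborSet, hN1]
    simp [Set.mem_insert_iff]
  have hadj2 : ∀ z, G.Adj u2 z ↔ (z = v2 ∨ z = v3 ∨ z = u0) := by
    intro z
    rw [← SimpleGraph.mem_neighborSet, hN2]
    simp [Set.mem_insert_iff]
  have hadj3 : ∀ z, G.Adj u3 z ↔ (z = v1 ∨ z = u0 ∨ z = u1) := by
    intro z
    rw [← SimpleGraph.mem_neighborSet, hN3]
    simp [Set.mem_insert_iff]
  have a0v1 : G.Adj u0 v1 := (hadj0 v1).mpr (by tauto)
  have a0v2 : G.Adj u0 v2 := (hadj0 v2).mpr (by tauto)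
  have a0v3 : G.Adj u0 v3 := (hadj0 v3).mpr (by tauto)
  have a0u1 : G.Adj u0 u1 := (hadj0 u1).mpr (by tauto)
  have a0u2 : G.Adj u0 u2 := (hadj0 u2).mpr (by tauto)
  have a0u3 : G.Adj u0 u3 := (hadj0 u3).mpr (by tauto)
  have a1v1 : G.Adj u1 v1 := (hadj1 v1).mpr (by tauto)
  have a1v2 : G.Adj u1 v2 := (hadj1 v2).mpr (by tauto)
  have a1u3 : G.Adj u1 u3 := (hadj1 u3).mpr (by tauto)
  have a2v2 : G.Adj u2 v2 := (hadj2 v2).mpr (by tauto)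
  have a2v3 : G.Adj u2 v3 := (hadj2 v3).mpr (by tauto)
  have a3v1 : G.Adj u3 v1 := (hadj3 v1).mpr (by tauto)
  -- distinctness
  have n3v3 : u3 ≠ v3 := by
    intro h
    have : G.Adj u3 v2 := by rw [h]; exact h23.symm
    rcases (hadj3 v2).mp this with h' | h' | h'
    · exact h12.ne h'.symm
    · exact a0v2.ne h'.symm
    · exact a1v2.ne h'.symm
  have n2v1 : u2 ≠ v1 := by
    intro h
    have : G.Adj u2 u1 := by rw [h]; exact a1v1.symm
    rcases (hadj2 u1).mp this with h' | h' | h'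
    · exact a1v2.ne h'
    · exact hu1v3 h'
    · exact a0u1.ne h'.symm
  have n3v2 : u3 ≠ v2 := by
    intro h
    have : G.Adj u3 v3 := by rw [h]; exact h23
    rcases (hadj3 v3).mp this with h' | h' | h'
    · exact h13.ne h'.symm
    · exact a0v3.ne h'.symm
    · exact hu1v3 h'.symm
  have n1u2 : u1 ≠ u2 := by
    intro h
    have : G.Adj u1 v3 := by rw [h]; exact a2v3
    rcases (hadj1 v3).mp this with h' | h' | h' | h'
    · exact h13.ne h'.symm
    · exact h23.ne h'.symm
    · exact a0v3.ne h'.symm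
    · exact n3v3 h'.symm
  have n2u3 : u2 ≠ u3 := by
    intro h
    have : G.Adj u3 v3 := by rw [← h]; exact a2v3
    rcases (hadj3 v3).mp this with h' | h' | h'
    · exact h13.ne h'.symm
    · exact a0v3.ne h'.symm
    · exact hu1v3 h'.symm
  have hv1S : v1 ∉ S := by
    simp [hS, Ne.symm a0v1.ne, Ne.symm a1v1.ne, n2v1.symm, Ne.symm a3v1.ne]
  have hv2S : v2 ∉ S := by
    simp [hS, Ne.symm a0v2.ne, Ne.symm a1v2.ne, Ne.symm a2v2.ne, n3v2.symm]
  have hv3S : v3 ∉ S := by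
    simp [hS, Ne.symm a0v3.ne, hu1v3.symm, Ne.symm a2v3.ne, n3v3.symm]
  have c12 : φ' v1 ≠ φ' v2 :=
    hφ'.1 _ _ ⟨h12, by simpa using hv1S, by simpa using hv2S⟩
  have c13 : φ' v1 ≠ φ' v3 :=
    hφ'.1 _ _ ⟨h13, by simpa using hv1S, by simpa using hv3S⟩
  have c23 : φ' v2 ≠ φ' v3 :=
    hφ'.1 _ _ ⟨h23, by simpa using hv2S, by simpa using hv3S⟩
  set φ : V → Fin 5 := fun z => if z = u0 then a0 else if z = u1 then a1 else
    if z = u2 then a2 else if z = u3 then a3 else φ' z with hφ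
  have hagree : ∀ x ∉ S, φ x = φ' x := by
    intro x hx
    simp only [hS, Finset.mem_insert, Finset.mem_singleton] at hx
    push_neg at hx
    simp [hφ, hx.1, hx.2.1, hx.2.2.1, hx.2.2.2]
  have hφ0 : φ u0 = a0 := by simp [hφ]
  have hφ1 : φ u1 = a1 := by simp [hφ, Ne.symm a0u1.ne]
  have hφ2 : φ u2 = a2 := by simp [hφ, Ne.symm a0u2.ne, n1u2.symm]
  have hφ3 : φ u3 = a3 := by simp [hφ, Ne.symm a0u3.ne, Ne.symm a1u3.ne, n2u3.symm]
  have hφv1 : φ v1 = φ' v1 := hagree v1 hv1S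
  have hφv2 : φ v2 = φ' v2 := hagree v2 hv2S
  have hφv3 : φ v3 = φ' v3 := hagree v3 hv3S
  have hproper : ProperColoring G φ := by
    refine proper_extend G S φ φ' hagree hφ'.1 ?_
    have key : ∀ z w, G.Adj z w → z ∈ S → φ z ≠ φ w := by
      intro z w hzw hz
      simp only [hS, Finset.mem_insert, Finset.mem_singleton] at hz
      rcases hz with rfl | rfl | rfl | rfl
      · rcases (hadj0 w).mp hzw with rfl | rfl | rfl | rfl | rfl | rfl
        · rw [hφ0, hφv1]; exact h01
        · rw [hφ0, hφv2]; exact h02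
        · rw [hφ0, hφv3]; exact h03
        · rw [hφ0, hφ1]; exact h0a1
        · rw [hφ0, hφ2]; exact h0a2
        · rw [hφ0, hφ3]; exact h0a3
      · rcases (hadj1 w).mp hzw with rfl | rfl | rfl | rfl
        · rw [hφ1, hφv1]; exact h11
        · rw [hφ1, hφv2]; exact h12c
        · rw [hφ1, hφ0]; exact Ne.symm h0a1
        · rw [hφ1, hφ3]; exact h1a3
      · rcases (hadj2 w).mp hzw with rfl | rfl | rfl
        · rw [hφ2, hφv2]; exact h22
        · rw [hφ2, hφv3]; exact h23c
        · rw [hφ2, hφ0]; exact Ne.symm h0a2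
      · rcases (hadj3 w).mp hzw with rfl | rfl | rfl
        · rw [hφ3, hφv1]; exact h31
        · rw [hφ3, hφ0]; exact Ne.symm h0a3
        · rw [hφ3, hφ1]; exact Ne.symm h1a3
    intro z w hzw hmem
    rcases hmem with hz | hw
    · exact key z w hzw hz
    · exact fun h => key w z hzw.symm hw h.symm
  refine ⟨φ, hagree, hproper, ?_, ?_, ?_, ?_⟩
  · intro x hx1 hx2 hx3 hni
    by_cases hxu0 : x = u0
    · rw [hxu0]
      obtain ⟨c, hc⟩ := hu0odd
      refine ⟨c, ?_⟩
      rw [colorCount_eq_sum G φ u0 c ({v1, v2, v3, u1, u2, u3} : Finset V)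
        (by rw [hN0]; simp)]
      rw [sum_six _ h12.ne h13.ne (Ne.symm a1v1.ne) n2v1.symm (Ne.symm a3v1.ne)
        h23.ne (Ne.symm a1v2.ne) (Ne.symm a2v2.ne) n3v2.symm
        hu1v3.symm (Ne.symm a2v3.ne) n3v3.symm n1u2 a1u3.ne n2u3]
      rw [hφv1, hφv2, hφv3, hφ1, hφ2, hφ3]
      exact hc
    by_cases hxu1 : x = u1
    · rw [hxu1]
      refine ⟨φ' v1, ?_⟩
      rw [colorCount_eq_sum G φ u1 (φ' v1) ({v1, v2, u0, u3} : Finset V)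
        (by rw [hN1]; simp)]
      rw [sum_quad _ h12.ne (Ne.symm a0v1.ne) (Ne.symm a3v1.ne)
        (Ne.symm a0v2.ne) n3v2.symm a0u3.ne]
      rw [hφv1, hφv2, hφ0, hφ3]
      simp [Ne.symm c12, h01, h31]
    by_cases hxu2 : x = u2
    · rw [hxu2]
      refine ⟨φ' v2, ?_⟩
      rw [colorCount_eq_sum G φ u2 (φ' v2) ({v2, v3, u0} : Finset V)
        (by rw [hN2]; simp)]
      rw [sum_triple _ h23.ne (Ne.symm a0v2.ne) (Ne.symm a0v3.ne)]
      rw [hφv2, hφv3, hφ0]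
      simp [Ne.symm c23, h02]
    by_cases hxu3 : x = u3
    · rw [hxu3]
      refine ⟨φ' v1, ?_⟩
      rw [colorCount_eq_sum G φ u3 (φ' v1) ({v1, u0, u1} : Finset V)
        (by rw [hN3]; simp)]
      rw [sum_triple _ (Ne.symm a0v1.ne) (Ne.symm a1v1.ne) a0u1.ne]
      rw [hφv1, hφ0, hφ1]
      simp [h01, h11]
    · refine far_odd G S φ φ' hagree hφ' x (by simp [hS, hxu0, hxu1, hxu2, hxu3]) ?_ hni
      intro u hu
      simp only [hS, Finset.mem_insert, Finset.mem_singleton] at hu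
      rcases hu with rfl | rfl | rfl | rfl
      · intro hadj
        rcases (hadj0 x).mp hadj.symm with rfl | rfl | rfl | rfl | rfl | rfl <;> simp_all
      · intro hadj
        rcases (hadj1 x).mp hadj.symm with rfl | rfl | rfl | rfl <;> simp_all
      · intro hadj
        rcases (hadj2 x).mp hadj.symm with rfl | rfl | rfl <;> simp_all
      · intro hadj
        rcases (hadj3 x).mp hadj.symm with rfl | rfl | rfl <;> simp_all
  · rintro ⟨c, hc⟩
    refine ⟨c, ?_⟩
    rw [colorCount_out G S φ φ' hagree v1 hv1S c]
    rw [hS, sum_quad _ a0u1.ne a0u2.ne a0u3.ne n1u2 a1u3.ne n2u3]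
    have A0 : G.Adj v1 u0 := a0v1.symm
    have A1 : G.Adj v1 u1 := a1v1.symm
    have A2 : ¬ G.Adj v1 u2 := by
      intro h
      rcases (hadj2 v1).mp h.symm with h' | h' | h'
      · exact h12.ne h'
      · exact h13.ne h'
      · exact a0v1.ne h'.symm
    have A3 : G.Adj v1 u3 := a3v1.symm
    simpa [A0, A1, A2, A3, hφ0, hφ1, hφ2, hφ3, hS] using hc
  · rintro ⟨c, hc⟩
    refine ⟨c, ?_⟩
    rw [colorCount_out G S φ φ' hagree v2 hv2S c]
    rw [hS, sum_quad _ a0u1.ne a0u2.ne a0u3.ne n1u2 a1u3.ne n2u3]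
    have A0 : G.Adj v2 u0 := a0v2.symm
    have A1 : G.Adj v2 u1 := a1v2.symm
    have A2 : G.Adj v2 u2 := a2v2.symm
    have A3 : ¬ G.Adj v2 u3 := by
      intro h
      rcases (hadj3 v2).mp h.symm with h' | h' | h'
      · exact h12.ne h'.symm
      · exact a0v2.ne h'.symm
      · exact a1v2.ne h'.symm
    simpa [A0, A1, A2, A3, hφ0, hφ1, hφ2, hφ3, hS] using hc
  · rintro ⟨c, hc⟩
    refine ⟨c, ?_⟩
    rw [colorCount_out G S φ φ' hagree v3 hv3S c]
    rw [hS, sum_quad _ a0u1.ne a0u2.ne a0u3.ne n1u2 a1u3.ne n2u3]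
    have A0 : G.Adj v3 u0 := a0v3.symm
    have A1 : ¬ G.Adj v3 u1 := by
      intro h
      rcases (hadj1 v3).mp h.symm with h' | h' | h' | h'
      · exact h13.ne h'.symm
      · exact h23.ne h'.symm
      · exact a0v3.ne h'.symm
      · exact n3v3 h'.symm
    have A2 : G.Adj v3 u2 := a2v3.symm
    have A3 : ¬ G.Adj v3 u3 := by
      intro h
      rcases (hadj3 v3).mp h.symm with h' | h' | h'
      · exact h13.ne h'.symm
      · exact a0v3.ne h'.symm
      · exact hu1v3 h'.symm
    simpa [A0, A1, A2, A3, hφ0, hφ1, hφ2, hφ3, hS] using hc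

end CaseD
section CaseDMain
variable {V : Type*} [Fintype V] [DecidableEq V]

lemma caseD_main (G : SimpleGraph V) (v1 v2 v3 u0 u1 u2 u3 t : V)
    (hh : IsOneHatPlus3 G v1 v2 v3 u0 u1 u2 u3) (hu1v3 : u1 ≠ v3)
    (φ' : V → Fin 5)
    (hφ' : IsOddColoring (GraphDel G ↑({u0, u1, u2, u3} : Finset V)) 5 φ')
    (ht : t = v1 ∨ t = v2 ∨ t = v3) :
    ∃ φ : V → Fin 5, (∀ x ∉ ({u0, u1, u2, u3} : Finset V), φ x = φ' x) ∧ ProperColoring G φ ∧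
      ∀ x, x ≠ t → (∃ u, G.Adj x u) → OddAt G φ x := by
  classical
  set S : Finset V := {u0, u1, u2, u3} with hS
  set G' := GraphDel G ↑S with hG'
  obtain ⟨h12, h23, h13, hN0, hN1, hN2, hN3⟩ := hh
  have hhh : IsOneHatPlus3 G v1 v2 v3 u0 u1 u2 u3 := ⟨h12, h23, h13, hN0, hN1, hN2, hN3⟩
  have hadj1 : ∀ z, G.Adj u1 z ↔ (z = v1 ∨ z = v2 ∨ z = u0 ∨ z = u3) := by
    intro z
    rw [← SimpleGraph.mem_neighborSet, hN1]
    simp [Set.mem_insert_iff]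
  have hadj2 : ∀ z, G.Adj u2 z ↔ (z = v2 ∨ z = v3 ∨ z = u0) := by
    intro z
    rw [← SimpleGraph.mem_neighborSet, hN2]
    simp [Set.mem_insert_iff]
  have hadj3 : ∀ z, G.Adj u3 z ↔ (z = v1 ∨ z = u0 ∨ z = u1) := by
    intro z
    rw [← SimpleGraph.mem_neighborSet, hN3]
    simp [Set.mem_insert_iff]
  have a0v1 : G.Adj u0 v1 := by rw [← SimpleGraph.mem_neighborSet, hN0]; simp
  have a0v2 : G.Adj u0 v2 := by rw [← SimpleGraph.mem_neighborSet, hN0]; simp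
  have a0v3 : G.Adj u0 v3 := by rw [← SimpleGraph.mem_neighborSet, hN0]; simp
  have a0u1 : G.Adj u0 u1 := by rw [← SimpleGraph.mem_neighborSet, hN0]; simp
  have a1v1 : G.Adj u1 v1 := (hadj1 v1).mpr (by tauto)
  have a1v2 : G.Adj u1 v2 := (hadj1 v2).mpr (by tauto)
  have a2v2 : G.Adj u2 v2 := (hadj2 v2).mpr (by tauto)
  have a2v3 : G.Adj u2 v3 := (hadj2 v3).mpr (by tauto)
  have a3v1 : G.Adj u3 v1 := (hadj3 v1).mpr (by tauto)
  have n3v3 : u3 ≠ v3 := by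
    intro h
    have : G.Adj u3 v2 := by rw [h]; exact h23.symm
    rcases (hadj3 v2).mp this with h' | h' | h'
    · exact h12.ne h'.symm
    · exact a0v2.ne h'.symm
    · exact a1v2.ne h'.symm
  have n2v1 : u2 ≠ v1 := by
    intro h
    have : G.Adj u2 u1 := by rw [h]; exact a1v1.symm
    rcases (hadj2 u1).mp this with h' | h' | h'
    · exact a1v2.ne h'
    · exact hu1v3 h'
    · exact a0u1.ne h'.symm
  have n3v2 : u3 ≠ v2 := by
    intro h
    have : G.Adj u3 v3 := by rw [h]; exact h23
    rcases (hadj3 v3).mp this with h' | h' | h'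
    · exact h13.ne h'.symm
    · exact a0v3.ne h'.symm
    · exact hu1v3 h'.symm
  have hv1S : v1 ∉ S := by
    simp [hS, Ne.symm a0v1.ne, Ne.symm a1v1.ne, n2v1.symm, Ne.symm a3v1.ne]
  have hv2S : v2 ∉ S := by
    simp [hS, Ne.symm a0v2.ne, Ne.symm a1v2.ne, Ne.symm a2v2.ne, n3v2.symm]
  have hv3S : v3 ∉ S := by
    simp [hS, Ne.symm a0v3.ne, hu1v3.symm, Ne.symm a2v3.ne, n3v3.symm]
  have c12 : φ' v1 ≠ φ' v2 :=
    hφ'.1 _ _ ⟨h12, by simpa using hv1S, by simpa using hv2S⟩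
  have c13 : φ' v1 ≠ φ' v3 :=
    hφ'.1 _ _ ⟨h13, by simpa using hv1S, by simpa using hv3S⟩
  have c23 : φ' v2 ≠ φ' v3 :=
    hφ'.1 _ _ ⟨h23, by simpa using hv2S, by simpa using hv3S⟩
  obtain ⟨p, q, hpq, hp1, hp2, hp3, hq1, hq2, hq3⟩ :=
    exists_two_colors (φ' v1) (φ' v2) (φ' v3) c12 c13 c23
  -- choose a2 obligations for v3 (used when t = v1 or t = v2)
  have hA2 : ∃ a2, (φ' v1 = a2 ∨ q = a2) ∧ Qab G' φ' v3 p a2 := by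
    by_cases H2 : Qab G' φ' v3 p (φ' v1)
    · exact ⟨φ' v1, Or.inl rfl, H2⟩
    · exact ⟨q, Or.inr rfl, Qab_of_even_right G' φ' v3 hpq
        (even_of_not_Qab G' φ' v3 H2 q hpq (Ne.symm hq1))⟩
  -- choose (a1, a3) obligation for v1 (used when t = v2 or t = v3)
  have hA13 : ∃ a1 a3, ((φ' v3 = a1 ∧ q = a3) ∨ (q = a1 ∧ φ' v2 = a3)) ∧
      Qabd G' φ' v1 p a1 a3 := by
    by_cases H1 : Qabd G' φ' v1 p (φ' v3) q
    · exact ⟨φ' v3, q, Or.inl ⟨rfl, rfl⟩, H1⟩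
    · exact ⟨q, φ' v2, Or.inr ⟨rfl, rfl⟩, Qabd_of_even_third G' φ' v1 hp2 hq2
        (even_of_not_Qabd G' φ' v1 H1 (φ' v2) hp2 (Ne.symm c23) hq2)⟩
  rcases ht with hteq | hteq | hteq
  · -- t = v1 : need v2 (Qabd p a1 a2) and v3 (Qab p a2)
    obtain ⟨a2, ha2val, hQ3⟩ := hA2
    obtain ⟨a1, a3, hval, hQ2⟩ :
        ∃ a1 a3, (((φ' v3 = a1 ∨ q = a1) ∧ (q = a3 ∨ φ' v2 = a3)) ∧
          (a1 ≠ a3 ∧ a3 ≠ φ' v1 ∧ ∃ c, Odd ((if φ' v1 = c then 1 else 0) +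
            ((if φ' v2 = c then 1 else 0) + ((if φ' v3 = c then 1 else 0) +
            ((if a1 = c then 1 else 0) + ((if a2 = c then 1 else 0) +
            (if a3 = c then 1 else 0)))))))) ∧ Qabd G' φ' v2 p a1 a2 := by
      rcases ha2val with rfl | rfl
      · by_cases H : Qabd G' φ' v2 p (φ' v3) (φ' v1)
        · refine ⟨φ' v3, q, ⟨⟨Or.inl rfl, Or.inl rfl⟩, Ne.symm hq3, hq1, φ' v2, ?_⟩, H⟩
          simp [c12, Ne.symm c23, hq2]
        · refine ⟨q, φ' v2, ⟨⟨Or.inr rfl, Or.inr rfl⟩, hq2, Ne.symm c12, φ' v3, ?_⟩,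
            Qabd_of_even_second G' φ' v2 hpq (Ne.symm hq1)
              (even_of_not_Qabd G' φ' v2 H q hpq (Ne.symm hq3) (Ne.symm hq1))⟩
          simp [c13, c23, hq3, Ne.symm c23]
      · by_cases H : Qabd G' φ' v2 p (φ' v3) q
        · refine ⟨φ' v3, φ' v2, ⟨⟨Or.inl rfl, Or.inr rfl⟩, Ne.symm c23, Ne.symm c12,
            φ' v1, ?_⟩, H⟩
          simp [Ne.symm c12, Ne.symm c13, hq1]
        · refine ⟨q, φ' v2, ⟨⟨Or.inr rfl, Or.inr rfl⟩, hq2, Ne.symm c12, φ' v1, ?_⟩,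
            Qabd_of_odd_pair G' φ' v2 hpq
              (odd_of_not_Qabd_third G' φ' v2 H hpq (Ne.symm hq3))⟩
          simp [Ne.symm c12, Ne.symm c13, hq1]
    obtain ⟨⟨ha1v, ha3v⟩, h1a3, h31, hu0odd⟩ := hval
    have h11 : a1 ≠ φ' v1 := by rcases ha1v with rfl | rfl; exacts [Ne.symm c13, hq1]
    have h12c : a1 ≠ φ' v2 := by rcases ha1v with rfl | rfl; exacts [Ne.symm c23, hq2]
    have h0a1 : p ≠ a1 := by rcases ha1v with rfl | rfl; exacts [hp3, hpq]
    have h0a3 : p ≠ a3 := by rcases ha3v with rfl | rfl; exacts [hpq, hp2]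
    have h22 : a2 ≠ φ' v2 := by rcases ha2val with rfl | rfl; exacts [c12, hq2]
    have h23c : a2 ≠ φ' v3 := by rcases ha2val with rfl | rfl; exacts [c13, hq3]
    have h0a2 : p ≠ a2 := by rcases ha2val with rfl | rfl; exacts [hp1, hpq]
    obtain ⟨φ, hag, hprop, hfar, _, hv2, hv3⟩ :=
      caseD_ext G v1 v2 v3 u0 u1 u2 u3 hhh hu1v3 φ' hφ' p a1 a2 a3
        hp1 hp2 hp3 h0a1 h0a2 h0a3 h11 h12c h1a3 h22 h23c h31 hu0odd
    refine ⟨φ, hag, hprop, ?_⟩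
    intro x hx hni
    have hx1 : x ≠ v1 := hteq ▸ hx
    by_cases hx2 : x = v2
    · exact hx2 ▸ hv2 hQ2
    by_cases hx3 : x = v3
    · exact hx3 ▸ hv3 hQ3
    exact hfar x hx1 hx2 hx3 hni
  · -- t = v2 : need v1 (Qabd p a1 a3) and v3 (Qab p a2)
    obtain ⟨a2, ha2val, hQ3⟩ := hA2
    obtain ⟨a1, a3, hval, hQ1⟩ := hA13
    have h0a2 : p ≠ a2 := by rcases ha2val with rfl | rfl; exacts [hp1, hpq]
    have h22 : a2 ≠ φ' v2 := by rcases ha2val with rfl | rfl; exacts [c12, hq2]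
    have h23c : a2 ≠ φ' v3 := by rcases ha2val with rfl | rfl; exacts [c13, hq3]
    have h11 : a1 ≠ φ' v1 := by rcases hval with ⟨rfl, _⟩ | ⟨rfl, _⟩; exacts [Ne.symm c13, hq1]
    have h12c : a1 ≠ φ' v2 := by rcases hval with ⟨rfl, _⟩ | ⟨rfl, _⟩; exacts [Ne.symm c23, hq2]
    have h0a1 : p ≠ a1 := by rcases hval with ⟨rfl, _⟩ | ⟨rfl, _⟩; exacts [hp3, hpq]
    have h0a3 : p ≠ a3 := by rcases hval with ⟨_, rfl⟩ | ⟨_, rfl⟩; exacts [hpq, hp2]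
    have h31 : a3 ≠ φ' v1 := by rcases hval with ⟨_, rfl⟩ | ⟨_, rfl⟩; exacts [hq1, Ne.symm c12]
    have h1a3 : a1 ≠ a3 := by
      rcases hval with ⟨rfl, rfl⟩ | ⟨rfl, rfl⟩; exacts [Ne.symm hq3, hq2]
    have hu0odd : ∃ c, Odd ((if φ' v1 = c then 1 else 0) + ((if φ' v2 = c then 1 else 0) +
        ((if φ' v3 = c then 1 else 0) + ((if a1 = c then 1 else 0) +
        ((if a2 = c then 1 else 0) + (if a3 = c then 1 else 0)))))) := by
      rcases hval with ⟨rfl, rfl⟩ | ⟨rfl, rfl⟩ <;> rcases ha2val with rfl | rfl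
      · exact ⟨φ' v2, by simp [c12, Ne.symm c23, hq2]⟩
      · exact ⟨φ' v1, by simp [Ne.symm c12, Ne.symm c13, hq1]⟩
      · exact ⟨φ' v3, by simp [c13, c23, hq3]⟩
      · exact ⟨φ' v1, by simp [Ne.symm c12, Ne.symm c13, hq1]⟩
    obtain ⟨φ, hag, hprop, hfar, hv1, _, hv3⟩ :=
      caseD_ext G v1 v2 v3 u0 u1 u2 u3 hhh hu1v3 φ' hφ' p a1 a2 a3
        hp1 hp2 hp3 h0a1 h0a2 h0a3 h11 h12c h1a3 h22 h23c h31 hu0odd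
    refine ⟨φ, hag, hprop, ?_⟩
    intro x hx hni
    have hx2 : x ≠ v2 := hteq ▸ hx
    by_cases hx1 : x = v1
    · exact hx1 ▸ hv1 hQ1
    by_cases hx3 : x = v3
    · exact hx3 ▸ hv3 hQ3
    exact hfar x hx1 hx2 hx3 hni
  · -- t = v3 : need v1 (Qabd p a1 a3) and v2 (Qabd p a1 a2)
    obtain ⟨a1, a3, hval, hQ1⟩ := hA13
    obtain ⟨a2, ha2val, hQ2⟩ :
        ∃ a2, (φ' v1 = a2 ∨ q = a2) ∧ Qabd G' φ' v2 p a1 a2 := by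
      rcases hval with ⟨rfl, _⟩ | ⟨rfl, _⟩
      · by_cases H : Qabd G' φ' v2 p (φ' v3) (φ' v1)
        · exact ⟨φ' v1, Or.inl rfl, H⟩
        · exact ⟨q, Or.inr rfl, Qabd_of_even_third G' φ' v2 hpq (Ne.symm hq3)
            (even_of_not_Qabd G' φ' v2 H q hpq (Ne.symm hq3) (Ne.symm hq1))⟩
      · by_cases H : Qabd G' φ' v2 p q (φ' v1)
        · exact ⟨φ' v1, Or.inl rfl, H⟩
        · exact ⟨q, Or.inr rfl, Qabd_of_odd_pair G' φ' v2 hpq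
            (odd_of_not_Qabd_mid G' φ' v2 H hpq (Ne.symm hq1))⟩
    have h0a2 : p ≠ a2 := by rcases ha2val with rfl | rfl; exacts [hp1, hpq]
    have h22 : a2 ≠ φ' v2 := by rcases ha2val with rfl | rfl; exacts [c12, hq2]
    have h23c : a2 ≠ φ' v3 := by rcases ha2val with rfl | rfl; exacts [c13, hq3]
    have h11 : a1 ≠ φ' v1 := by rcases hval with ⟨rfl, _⟩ | ⟨rfl, _⟩; exacts [Ne.symm c13, hq1]
    have h12c : a1 ≠ φ' v2 := by rcases hval with ⟨rfl, _⟩ | ⟨rfl, _⟩; exacts [Ne.symm c23, hq2]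
    have h0a1 : p ≠ a1 := by rcases hval with ⟨rfl, _⟩ | ⟨rfl, _⟩; exacts [hp3, hpq]
    have h0a3 : p ≠ a3 := by rcases hval with ⟨_, rfl⟩ | ⟨_, rfl⟩; exacts [hpq, hp2]
    have h31 : a3 ≠ φ' v1 := by rcases hval with ⟨_, rfl⟩ | ⟨_, rfl⟩; exacts [hq1, Ne.symm c12]
    have h1a3 : a1 ≠ a3 := by
      rcases hval with ⟨rfl, rfl⟩ | ⟨rfl, rfl⟩; exacts [Ne.symm hq3, hq2]
    have hu0odd : ∃ c, Odd ((if φ' v1 = c then 1 else 0) + ((if φ' v2 = c then 1 else 0) +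
        ((if φ' v3 = c then 1 else 0) + ((if a1 = c then 1 else 0) +
        ((if a2 = c then 1 else 0) + (if a3 = c then 1 else 0)))))) := by
      rcases hval with ⟨rfl, rfl⟩ | ⟨rfl, rfl⟩ <;> rcases ha2val with rfl | rfl
      · exact ⟨φ' v2, by simp [c12, Ne.symm c23, hq2]⟩
      · exact ⟨φ' v1, by simp [Ne.symm c12, Ne.symm c13, hq1]⟩
      · exact ⟨φ' v3, by simp [c13, c23, hq3]⟩
      · exact ⟨φ' v1, by simp [Ne.symm c12, Ne.symm c13, hq1]⟩
    obtain ⟨φ, hag, hprop, hfar, hv1, hv2, _⟩ :=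
      caseD_ext G v1 v2 v3 u0 u1 u2 u3 hhh hu1v3 φ' hφ' p a1 a2 a3
        hp1 hp2 hp3 h0a1 h0a2 h0a3 h11 h12c h1a3 h22 h23c h31 hu0odd
    refine ⟨φ, hag, hprop, ?_⟩
    intro x hx hni
    have hx3 : x ≠ v3 := hteq ▸ hx
    by_cases hx1 : x = v1
    · exact hx1 ▸ hv1 hQ1
    by_cases hx2 : x = v2
    · exact hx2 ▸ hv2 hQ2
    exact hfar x hx1 hx2 hx3 hni

end CaseDMain

/-- Extension lemma for 3-trees: if `B({v₁,v₂,v₃},u₀)` is an ear,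
one-hat or one-hat plus with internal vertex set `S` and `G - S` has an odd
5-coloring `φ'`, then for each `i` it extends to a proper 5-coloring of `G` that is
odd away from `{vᵢ, v_{i+1}}` (indices mod 3), and if `B` is a one-hat or a one-hat
plus, odd away from `{vᵢ}` alone. -/
theorem three_tree_extension {V : Type*} [Fintype V] [DecidableEq V]
    (G : SimpleGraph V) (hG : IsKTree 3 G) (v : Fin 3 → V) (u₀ : V) (S : Finset V)
    (hB : (S = {u₀} ∧ IsEar3 G (v 0) (v 1) (v 2) u₀) ∨
      (∃ u₁, S = {u₀, u₁} ∧ IsOneHat3 G (v 0) (v 1) (v 2) u₀ u₁) ∨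
      (∃ u₁ u₂ u₃, S = {u₀, u₁, u₂, u₃} ∧
        IsOneHatPlus3 G (v 0) (v 1) (v 2) u₀ u₁ u₂ u₃))
    (φ' : V → Fin 5) (hφ' : IsOddColoring (GraphDel G ↑S) 5 φ') :
    ∀ i : Fin 3,
      (∃ φ : V → Fin 5, (∀ x ∉ S, φ x = φ' x) ∧ ProperColoring G φ ∧
        ∀ x : V, x ≠ v i → x ≠ v (i + 1) → (∃ u, G.Adj x u) → OddAt G φ x) ∧
      (((∃ u₁, S = {u₀, u₁} ∧ IsOneHat3 G (v 0) (v 1) (v 2) u₀ u₁) ∨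
          (∃ u₁ u₂ u₃, S = {u₀, u₁, u₂, u₃} ∧
            IsOneHatPlus3 G (v 0) (v 1) (v 2) u₀ u₁ u₂ u₃)) →
        ∃ φ : V → Fin 5, (∀ x ∉ S, φ x = φ' x) ∧ ProperColoring G φ ∧
          ∀ x : V, x ≠ v i → (∃ u, G.Adj x u) → OddAt G φ x) := by
  classical
  intro i
  have hc1 : ∀ j : Fin 3, j = 0 ∨ j = 1 ∨ j = 2 := by decide
  have hc2 : ∀ i j : Fin 3, j = i ∨ j = i + 1 ∨ j = i + 2 := by decide
  rcases hB with ⟨hSeq, hear⟩ | ⟨u1, hSeq, hoh⟩ | ⟨u1, u2, u3, hSeq, hp⟩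
  · -- ear
    subst hSeq
    constructor
    · have hw : v (i + 2) = v 0 ∨ v (i + 2) = v 1 ∨ v (i + 2) = v 2 := by
        rcases hc1 (i + 2) with h | h | h <;> rw [h] <;> tauto
      obtain ⟨φ, hag, hprop, hwodd, hfar⟩ :=
        caseA_main G (v 0) (v 1) (v 2) u₀ (v (i + 2)) hear φ' hφ' hw
      refine ⟨φ, hag, hprop, ?_⟩
      intro x hxi hxi1 hni
      by_cases hx2 : x = v (i + 2)
      · exact hx2 ▸ hwodd (hx2 ▸ hni)
      · refine hfar x ?_ ?_ ?_ hni
        · rcases hc2 i 0 with h | h | h <;> rw [h] <;> assumption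
        · rcases hc2 i 1 with h | h | h <;> rw [h] <;> assumption
        · rcases hc2 i 2 with h | h | h <;> rw [h] <;> assumption
    · rintro (⟨u1, hSeq', hoh⟩ | ⟨u1, u2, u3, hSeq', hp⟩)
      · exfalso
        have hu1 : u1 = u₀ := by
          have : u1 ∈ ({u₀} : Finset V) := by rw [hSeq']; simp
          simpa using this
        rw [hu1] at hoh
        have : G.Adj u₀ u₀ := by
          rw [← SimpleGraph.mem_neighborSet, hoh.2.2.2.1]
          simp
        exact G.irrefl this
      · exfalso
        have hu2 : u2 = u₀ := by
          have : u2 ∈ ({u₀} : Finset V) := by rw [hSeq']; simp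
          simpa using this
        rw [hu2] at hp
        have : G.Adj u₀ u₀ := by
          rw [← SimpleGraph.mem_neighborSet, hp.2.2.2.2.2.1]
          simp
        exact G.irrefl this
  · -- one-hat
    subst hSeq
    by_cases hdeg : u1 = v 2
    · subst hdeg
      obtain ⟨φ, hag, hprop, hall⟩ := caseC_main G (v 0) (v 1) (v 2) u₀ hoh φ' hφ'
      exact ⟨⟨φ, hag, hprop, fun x _ _ hni => hall x hni⟩,
        fun _ => ⟨φ, hag, hprop, fun x _ hni => hall x hni⟩⟩
    · have ht : v i = v 0 ∨ v i = v 1 ∨ v i = v 2 := by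
        rcases hc1 i with h | h | h <;> rw [h] <;> tauto
      obtain ⟨φ, hag, hprop, hodd⟩ :=
        caseB_main G (v 0) (v 1) (v 2) u₀ u1 (v i) hoh hdeg φ' hφ' ht
      exact ⟨⟨φ, hag, hprop, fun x hxi _ hni => hodd x hxi hni⟩,
        fun _ => ⟨φ, hag, hprop, hodd⟩⟩
  · -- one-hat plus
    subst hSeq
    by_cases hdeg : u1 = v 2
    · subst hdeg
      obtain ⟨h12, h23, h13, hN0, hN1, hN2, hN3⟩ := hp
      have a2v2 : G.Adj u2 (v 1) := by
        rw [← SimpleGraph.mem_neighborSet, hN2]; simp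
      have a2v3 : G.Adj u2 (v 2) := by
        rw [← SimpleGraph.mem_neighborSet, hN2]; simp
      have a0v2 : G.Adj u₀ (v 1) := by
        rw [← SimpleGraph.mem_neighborSet, hN0]; simp
      have a0v3 : G.Adj u₀ (v 2) := by
        rw [← SimpleGraph.mem_neighborSet, hN0]; simp
      have a0u2 : G.Adj u₀ u2 := by
        rw [← SimpleGraph.mem_neighborSet, hN0]; simp
      have a3v1 : G.Adj u3 (v 0) := by
        rw [← SimpleGraph.mem_neighborSet, hN3]; simp
      have a0u3 : G.Adj u₀ u3 := by
        rw [← SimpleGraph.mem_neighborSet, hN0]; simp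
      have a1u3 : G.Adj (v 2) u3 := by
        rw [← SimpleGraph.mem_neighborSet, hN1]; simp
      have hadj1 : ∀ z, G.Adj (v 2) z ↔ (z = v 0 ∨ z = v 1 ∨ z = u₀ ∨ z = u3) := by
        intro z
        rw [← SimpleGraph.mem_neighborSet, hN1]
        simp [Set.mem_insert_iff]
      have hadj3 : ∀ z, G.Adj u3 z ↔ (z = v 0 ∨ z = u₀ ∨ z = v 2) := by
        intro z
        rw [← SimpleGraph.mem_neighborSet, hN3]
        simp [Set.mem_insert_iff]
      have hu2 : u2 = v 0 := by
        have h' := (hadj1 u2).mp a2v3.symm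
        rcases h' with h' | h' | h' | h'
        · exact h'
        · exact absurd h' a2v2.ne
        · exact absurd h'.symm a0u2.ne
        · exfalso
          have : G.Adj u3 (v 1) := h' ▸ a2v2
          rcases (hadj3 (v 1)).mp this with h'' | h'' | h''
          · exact h12.ne h''.symm
          · exact a0v2.ne h''.symm
          · exact h23.ne h''
      subst hu2
      have hu3 : u3 = v 1 := by
        have hmem : u3 ∈ G.neighborSet (v 0) := a3v1.symm
        rw [hN2] at hmem
        simp only [Set.mem_insert_iff, Set.mem_singleton_iff] at hmem
        rcases hmem with h'' | h'' | h''
        · exact h''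
        · exact absurd h''.symm a1u3.ne
        · exact absurd h''.symm a0u3.ne
      subst hu3
      have hpE : IsOneHatPlus3 G (v 0) (v 1) (v 2) u₀ (v 2) (v 0) (v 1) :=
        ⟨h12, h23, h13, hN0, hN1, hN2, hN3⟩
      have hφ'E : IsOddColoring (GraphDel G ↑({u₀, v 2, v 0, v 1} : Finset V)) 5 φ' := hφ'
      obtain ⟨φ, hag, hprop, hall⟩ := caseE_main G (v 0) (v 1) (v 2) u₀ hpE φ' hφ'E
      exact ⟨⟨φ, hag, hprop, fun x _ _ hni => hall x hni⟩,
        fun _ => ⟨φ, hag, hprop, fun x _ hni => hall x hni⟩⟩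
    · have ht : v i = v 0 ∨ v i = v 1 ∨ v i = v 2 := by
        rcases hc1 i with h | h | h <;> rw [h] <;> tauto
      obtain ⟨φ, hag, hprop, hodd⟩ :=
        caseD_main G (v 0) (v 1) (v 2) u₀ u1 u2 u3 (v i) hp hdeg φ' hφ' ht
      exact ⟨⟨φ, hag, hprop, fun x hxi _ hni => hodd x hxi hni⟩,
        fun _ => ⟨φ, hag, hprop, hodd⟩⟩
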